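/- arXiv:2104.13801 — 5 statements merged into one kernel-verified Lean document; each statement's English description precedes it below -/
import Mathlib

section
/- For every l ∈ ℝ and s > 0, the differential entropy of the Cauchy density equals log(4πs); that is, −∫_ℝ p_{l,s}(x)·log p_{l,s}(x) dx = log(4·π·s). -/
open MeasureTheory Real

/-- The Cauchy density with location `l` and scale `s`. -/
noncomputable def cauchyPdf (l s x : ℝ) : ℝ := s / (π * (s ^ 2 + (x - l) ^ 2))

section CauchyEntropyAux

open Set

lemma integrableOn_negLog : IntegrableOn (fun x : ℝ => -Real.log x) (Ioc (0:ℝ) 1) := by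
  have : ∀ x ∈ Ioo (0:ℝ) 1, HasDerivAt (fun x : ℝ => x - x * Real.log x) (-Real.log x) x := by
    intro x hx
    have h := (hasDerivAt_id x).sub (Real.hasDerivAt_mul_log (ne_of_gt hx.1))
    exact h.congr_deriv (by ring)
  exact intervalIntegral.integrableOn_deriv_of_nonneg
    ((continuous_id.sub Real.continuous_mul_log).continuousOn) this
    (fun x hx => by simpa using Real.log_nonpos hx.1.le hx.2.le)

lemma intervalIntegrable_log_sin_aux : IntervalIntegrable (fun x => Real.log (Real.sin x))
    volume 0 (π/2) := by
  rw [intervalIntegrable_iff_integrableOn_Ioc_of_le (by positivity)]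
  have hmeas : AEStronglyMeasurable (fun x => Real.log (Real.sin x))
      (volume.restrict (Ioc (0:ℝ) (π/2))) :=
    (Real.measurable_log.comp Real.measurable_sin).aestronglyMeasurable
  have hg : IntegrableOn (fun x : ℝ => -Real.log x + Real.log (π/2)) (Ioc (0:ℝ) (π/2)) := by
    have h1 : IntegrableOn (fun x : ℝ => -Real.log x + Real.log (π/2)) (Ioc (0:ℝ) 1) :=
      integrableOn_negLog.add (integrableOn_const measure_Ioc_lt_top.ne)
    have h2 : IntegrableOn (fun x : ℝ => -Real.log x + Real.log (π/2)) (Ioc (1:ℝ) (π/2)) := by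
      apply (ContinuousOn.integrableOn_compact isCompact_Icc ?_).mono_set Ioc_subset_Icc_self
      apply ContinuousOn.add ?_ continuousOn_const
      exact (Real.continuousOn_log.mono (fun x hx => by
        simp only [mem_compl_iff, mem_singleton_iff]
        intro h; subst h; exact absurd hx.1 (by norm_num))).neg
    have := h1.union h2
    apply this.mono_set
    rw [Ioc_union_Ioc_eq_Ioc (by norm_num) (by linarith [Real.pi_gt_three])]
  refine Integrable.mono hg hmeas ?_
  filter_upwards [ae_restrict_mem measurableSet_Ioc] with x hx
  have hx0 : 0 < x := hx.1
  have hx2 : x ≤ π/2 := hx.2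
  have hsinpos : 0 < Real.sin x := Real.sin_pos_of_pos_of_lt_pi hx0 (by linarith [Real.pi_pos])
  have hb : 2/π * x ≤ Real.sin x := Real.mul_le_sin hx0.le hx2
  have hsin1 : Real.sin x ≤ 1 := Real.sin_le_one x
  have hlog1 : Real.log (Real.sin x) ≤ 0 := Real.log_nonpos hsinpos.le hsin1
  have hlog2 : Real.log (2/π * x) ≤ Real.log (Real.sin x) :=
    Real.log_le_log (by positivity) hb
  rw [Real.norm_of_nonpos hlog1]
  have : Real.log (2/π * x) = Real.log x - Real.log (π/2) := by
    rw [Real.log_mul (by positivity) hx0.ne', Real.log_div (by norm_num) (by positivity),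
      Real.log_div (by positivity) (by norm_num)]
    ring
  have hge : -(Real.log (Real.sin x)) ≤ -Real.log x + Real.log (π/2) := by
    rw [this] at hlog2; linarith
  calc -(Real.log (Real.sin x)) ≤ -Real.log x + Real.log (π/2) := hge
    _ ≤ ‖-Real.log x + Real.log (π/2)‖ := le_abs_self _

lemma integral_log_sin_eq : ∫ x in (0:ℝ)..(π/2), Real.log (Real.sin x) = -(π/2) * Real.log 2 := by
  set I := ∫ x in (0:ℝ)..(π/2), Real.log (Real.sin x) with hIdef
  have hIs := intervalIntegrable_log_sin_aux
  have hfun : (fun x => Real.log (Real.sin (π/2 - x))) = fun x => Real.log (Real.cos x) := by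
    funext x; rw [Real.sin_pi_div_two_sub]
  have hIc : IntervalIntegrable (fun x => Real.log (Real.cos x)) volume 0 (π/2) := by
    have h := hIs.comp_sub_left (π/2)
    rw [hfun] at h
    simpa using h.symm
  have hcos_eq : (∫ x in (0:ℝ)..(π/2), Real.log (Real.cos x)) = I := by
    rw [← hfun]
    have h := intervalIntegral.integral_comp_sub_left (a := 0) (b := π/2)
      (fun x => Real.log (Real.sin x)) (π/2)
    simpa using h
  have hfun2 : (fun x => Real.log (Real.sin (π - x))) = fun x => Real.log (Real.sin x) := by
    funext x; rw [Real.sin_pi_sub]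
  have hIu : IntervalIntegrable (fun x => Real.log (Real.sin x)) volume (π/2) π := by
    have h := hIs.comp_sub_left π
    rw [hfun2] at h
    simpa [show π - π/2 = π/2 by ring] using h.symm
  have hupper : (∫ x in (π/2)..π, Real.log (Real.sin x)) = I := by
    have h := intervalIntegral.integral_comp_sub_left (a := 0) (b := π/2)
      (fun x => Real.log (Real.sin x)) π
    rw [hfun2, show π - π/2 = π/2 by ring, sub_zero] at h
    exact h.symm
  have hfull : (∫ x in (0:ℝ)..π, Real.log (Real.sin x)) = 2 * I := by
    rw [← intervalIntegral.integral_add_adjacent_intervals hIs hIu, hupper, ← hIdef]; ring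
  have hId : IntervalIntegrable (fun x => Real.log (Real.sin (2 * x))) volume 0 (π/2) := by
    have h := (hIs.trans hIu).comp_mul_left (c := 2)
    simpa using h
  have hdouble : (∫ x in (0:ℝ)..(π/2), Real.log (Real.sin (2 * x))) = I := by
    have h := intervalIntegral.integral_comp_mul_left (a := 0) (b := π/2) (c := 2)
      (f := fun x => Real.log (Real.sin x)) (by norm_num)
    rw [show (2:ℝ) * 0 = 0 by ring, show (2:ℝ) * (π/2) = π by ring, hfull] at h
    rw [h]; simp
  have hae : ∀ᵐ x ∂(volume : Measure ℝ), x ∈ Set.uIoc (0:ℝ) (π/2) →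
      Real.log (Real.sin x) + Real.log (Real.cos x)
        = Real.log (Real.sin (2 * x)) - Real.log 2 := by
    have h1 : ∀ᵐ x : ℝ, x ≠ π/2 := by
      refine ae_iff.2 ?_
      simp
    filter_upwards [h1] with x hx hmem
    rw [Set.uIoc_of_le (by positivity)] at hmem
    have hx0 : 0 < x := hmem.1
    have hx2 : x < π/2 := lt_of_le_of_ne hmem.2 hx
    have hsin : 0 < Real.sin x := Real.sin_pos_of_pos_of_lt_pi hx0 (by linarith [Real.pi_pos])
    have hcos : 0 < Real.cos x := Real.cos_pos_of_mem_Ioo ⟨by linarith, hx2⟩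
    rw [Real.sin_two_mul, Real.log_mul (by positivity) hcos.ne',
      Real.log_mul (by norm_num) hsin.ne']
    ring
  have hsum : 2 * I = I - (π/2) * Real.log 2 := by
    have h1 : (∫ x in (0:ℝ)..(π/2), (Real.log (Real.sin x) + Real.log (Real.cos x)))
        = 2 * I := by
      rw [intervalIntegral.integral_add hIs hIc, hcos_eq, ← hIdef]; ring
    have h2 : (∫ x in (0:ℝ)..(π/2), (Real.log (Real.sin x) + Real.log (Real.cos x)))
        = ∫ x in (0:ℝ)..(π/2), (Real.log (Real.sin (2 * x)) - Real.log 2) :=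
      intervalIntegral.integral_congr_ae hae
    have h3 : (∫ x in (0:ℝ)..(π/2), (Real.log (Real.sin (2 * x)) - Real.log 2))
        = I - (π/2) * Real.log 2 := by
      rw [intervalIntegral.integral_sub hId intervalIntegrable_const, hdouble]
      simp [sub_zero]
    rw [← h1, h2, h3]
  linarith

lemma intervalIntegrable_log_cos_half :
    IntervalIntegrable (fun x => Real.log (Real.cos x)) volume 0 (π/2) := by
  have hfun : (fun x => Real.log (Real.sin (π/2 - x))) = fun x => Real.log (Real.cos x) := by
    funext x; rw [Real.sin_pi_div_two_sub]
  have h := intervalIntegrable_log_sin_aux.comp_sub_left (π/2)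
  rw [hfun] at h
  simpa using h.symm

lemma integral_log_cos_half :
    ∫ x in (0:ℝ)..(π/2), Real.log (Real.cos x) = -(π/2) * Real.log 2 := by
  have hfun : (fun x => Real.log (Real.sin (π/2 - x))) = fun x => Real.log (Real.cos x) := by
    funext x; rw [Real.sin_pi_div_two_sub]
  have h := intervalIntegral.integral_comp_sub_left (a := 0) (b := π/2)
    (fun x => Real.log (Real.sin x)) (π/2)
  rw [hfun] at h
  simpa [integral_log_sin_eq] using h

lemma intervalIntegrable_log_cos_full :
    IntervalIntegrable (fun x => Real.log (Real.cos x)) volume (-(π/2)) (π/2) := by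
  have hneg : IntervalIntegrable (fun x => Real.log (Real.cos x)) volume (-(π/2)) 0 := by
    have h := (IntervalIntegrable.iff_comp_neg (by simp)).1 intervalIntegrable_log_cos_half
    simp only [Real.cos_neg, neg_zero] at h
    exact h.symm
  exact hneg.trans intervalIntegrable_log_cos_half

lemma integral_log_cos_full :
    ∫ x in (-(π/2))..(π/2), Real.log (Real.cos x) = -π * Real.log 2 := by
  have hneg : IntervalIntegrable (fun x => Real.log (Real.cos x)) volume (-(π/2)) 0 := by
    have h := (IntervalIntegrable.iff_comp_neg (by simp)).1 intervalIntegrable_log_cos_half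
    simp only [Real.cos_neg, neg_zero] at h
    exact h.symm
  have hlow : (∫ x in (-(π/2):ℝ)..0, Real.log (Real.cos x)) = -(π/2) * Real.log 2 := by
    have h := intervalIntegral.integral_comp_neg (a := 0) (b := π/2)
      (fun x => Real.log (Real.cos x))
    simp only [Real.cos_neg, neg_zero] at h
    rw [← h, integral_log_cos_half]
  rw [← intervalIntegral.integral_add_adjacent_intervals hneg intervalIntegrable_log_cos_half,
    hlow, integral_log_cos_half]
  ring

end CauchyEntropyAux

open Set in
/-- The differential entropy of the Cauchy density `p_{l,s}` equals `log (4πs)`. -/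
theorem cauchy_entropy (l s : ℝ) (hs : 0 < s) :
    -∫ x : ℝ, cauchyPdf l s x * Real.log (cauchyPdf l s x) = Real.log (4 * π * s) := by
  have hπ := Real.pi_pos
  set φ : ℝ → ℝ := fun θ => l + s * Real.tan θ with hφ
  have hmeas : MeasurableSet (Ioo (-(π/2)) (π/2)) := measurableSet_Ioo
  have himg : φ '' Ioo (-(π/2)) (π/2) = Set.univ := by
    have : φ = (fun y => l + s * y) ∘ Real.tan := rfl
    rw [this, Set.image_comp, Real.image_tan_Ioo, Set.image_univ]
    refine Set.range_eq_univ.2 fun y => ⟨(y - l) / s, ?_⟩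
    field_simp
    ring
  have hderiv : ∀ θ ∈ Ioo (-(π/2)) (π/2),
      HasDerivWithinAt φ (s * (1 / Real.cos θ ^ 2)) (Ioo (-(π/2)) (π/2)) θ := by
    intro θ hθ
    have hc : 0 < Real.cos θ := Real.cos_pos_of_mem_Ioo hθ
    exact (((Real.hasDerivAt_tan hc.ne').const_mul s).const_add l).hasDerivWithinAt
  have hinj : Set.InjOn φ (Ioo (-(π/2)) (π/2)) := by
    intro a ha b hb h
    have : Real.tan a = Real.tan b := by
      have := sub_eq_zero.2 h
      simp only [hφ] at this
      have : s * (Real.tan a - Real.tan b) = 0 := by ring_nf; ring_nf at this; linarith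
      rcases mul_eq_zero.1 this with h' | h'
      · exact absurd h' hs.ne'
      · linarith [sub_eq_zero.1 h']
    exact Real.injOn_tan ha hb this
  have key := integral_image_eq_integral_abs_deriv_smul hmeas hderiv hinj
    (fun x => cauchyPdf l s x * Real.log (cauchyPdf l s x))
  rw [himg, MeasureTheory.setIntegral_univ] at key
  rw [key]
  have hptwise : ∀ θ ∈ Ioo (-(π/2)) (π/2),
      |s * (1 / Real.cos θ ^ 2)| • (cauchyPdf l s (φ θ) * Real.log (cauchyPdf l s (φ θ)))
        = (1/π) * (2 * Real.log (Real.cos θ) - Real.log (π * s)) := by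
    intro θ hθ
    have hc : 0 < Real.cos θ := Real.cos_pos_of_mem_Ioo hθ
    have hp : cauchyPdf l s (φ θ) = Real.cos θ ^ 2 / (π * s) := by
      have h1 : s ^ 2 + (l + s * Real.tan θ - l) ^ 2 = s ^ 2 / Real.cos θ ^ 2 := by
        rw [Real.tan_eq_sin_div_cos]
        field_simp
        linear_combination s ^ 2 * (Real.sin_sq_add_cos_sq θ)
      simp only [hφ, cauchyPdf]
      rw [h1]
      rw [div_eq_div_iff (by positivity) (by positivity)]
      field_simp
    have habs : |s * (1 / Real.cos θ ^ 2)| = s / Real.cos θ ^ 2 := by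
      rw [abs_of_pos (by positivity)]; ring
    have hlogp : Real.log (Real.cos θ ^ 2 / (π * s))
        = 2 * Real.log (Real.cos θ) - Real.log (π * s) := by
      rw [Real.log_div (by positivity) (by positivity), Real.log_pow]
      norm_num
    rw [habs, hp, hlogp, smul_eq_mul]
    field_simp
  rw [MeasureTheory.setIntegral_congr_fun hmeas hptwise]
  have hIoo : (∫ θ in Ioo (-(π/2)) (π/2),
      (1/π) * (2 * Real.log (Real.cos θ) - Real.log (π * s)))
      = ∫ θ in (-(π/2))..(π/2), (1/π) * (2 * Real.log (Real.cos θ) - Real.log (π * s)) := by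
    rw [intervalIntegral.integral_of_le (by linarith), MeasureTheory.integral_Ioc_eq_integral_Ioo]
  rw [hIoo]
  have hint : IntervalIntegrable (fun θ => 2 * Real.log (Real.cos θ)) volume (-(π/2)) (π/2) :=
    intervalIntegrable_log_cos_full.const_mul 2
  rw [intervalIntegral.integral_const_mul,
    intervalIntegral.integral_sub hint intervalIntegrable_const,
    intervalIntegral.integral_const_mul, integral_log_cos_full,
    intervalIntegral.integral_const]
  have hπs : Real.log (π * s) = Real.log π + Real.log s := Real.log_mul hπ.ne' hs.ne'
  have hlog4 : Real.log (4 * π * s) = 2 * Real.log 2 + Real.log π + Real.log s := by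
    rw [show (4:ℝ) * π * s = 2^2 * (π * s) by ring,
      Real.log_mul (by norm_num) (by positivity), Real.log_pow, hπs]
    push_cast; ring
  have hlen : π/2 - -(π/2) = π := by ring
  rw [hπs, hlog4, hlen, smul_eq_mul]
  field_simp
  ring
end

section
/- Let l0,l1 ∈ ℝ, s0,s1 > 0, θ ∈ (0,1), and m_θ(x) = (1−θ)·p_{l0,s0}(x) + θ·p_{l1,s1}(x). Then the Kullback–Leibler divergence from p_{l0,s0} to m_θ satisfies ∫_ℝ p_{l0,s0}(x)·log(p_{l0,s0}(x)/m_θ(x)) dx = log( ((l0−l1)² + (s0+s1)²) / ( (1−θ)·(s0² + s1² + (l0−l1)²) + 2·θ·s0·s1 + 2·√( s0²·s1² + s0·s1·((s0−s1)² + (l0−l1)²)·θ·(1−θ) ) ) ). -/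
open MeasureTheory Real

section KLCAux
open Filter Set Topology

namespace KLC

lemma one_add_sq_pos (x : ℝ) : (0:ℝ) < 1 + x ^ 2 := by positivity

/-- master integrability -/
lemma integrable_inv_one_add_sq_mul_log :
    Integrable (fun x : ℝ => (1 + x ^ 2)⁻¹ * Real.log (1 + x ^ 2)) := by
  have h32 : Integrable (fun x : ℝ => (1 + ‖x‖) ^ (-(3/2 : ℝ))) :=
    integrable_one_add_norm (E := ℝ) (by simp; norm_num)
  have hcont : Continuous (fun x : ℝ => (1 + x ^ 2)⁻¹ * Real.log (1 + x ^ 2)) := by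
    refine Continuous.mul (Continuous.inv₀ (by continuity) (fun x => (one_add_sq_pos x).ne'))
      (Continuous.log (by continuity) (fun x => (one_add_sq_pos x).ne'))
  apply ((h32.const_mul (4 * 2 ^ (3/4 : ℝ))).mono' hcont.aestronglyMeasurable)
  filter_upwards with x
  have h1 : (0:ℝ) < 1 + x ^ 2 := one_add_sq_pos x
  have hN : (0:ℝ) < 1 + ‖x‖ := by positivity
  have hlog : Real.log (1 + x ^ 2) ≤ 4 * (1 + x ^ 2) ^ (1/4 : ℝ) := by
    have := Real.log_le_rpow_div (le_of_lt h1) (show (0:ℝ) < 1/4 by norm_num)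
    calc Real.log (1 + x ^ 2) ≤ (1 + x ^ 2) ^ (1/4 : ℝ) / (1/4) := this
    _ = 4 * (1 + x ^ 2) ^ (1/4 : ℝ) := by ring
  have hlognn : 0 ≤ Real.log (1 + x ^ 2) := Real.log_nonneg (by nlinarith)
  rw [Real.norm_eq_abs, abs_of_nonneg (by positivity)]
  have step1 : (1 + x ^ 2)⁻¹ * Real.log (1 + x ^ 2) ≤ 4 * (1 + x ^ 2) ^ (-(3/4) : ℝ) := by
    have : (1 + x ^ 2)⁻¹ * Real.log (1 + x ^ 2) ≤ (1 + x ^ 2)⁻¹ * (4 * (1 + x ^ 2) ^ (1/4 : ℝ)) :=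
      mul_le_mul_of_nonneg_left hlog (by positivity)
    refine this.trans (le_of_eq ?_)
    rw [← Real.rpow_neg_one (1 + x ^ 2), mul_comm, mul_assoc, ← Real.rpow_add h1]
    norm_num
  refine step1.trans ?_
  have base : ((1 + x ^ 2))⁻¹ ≤ 2 * ((1 + ‖x‖) ^ 2)⁻¹ := by
    have h2 : (1 + ‖x‖) ^ 2 ≤ 2 * (1 + x ^ 2) := by
      have hs : ‖x‖ ^ 2 = x ^ 2 := by rw [Real.norm_eq_abs, sq_abs]
      nlinarith [sq_nonneg (‖x‖ - 1)]
    have h1' : (0:ℝ) < (1 + ‖x‖) ^ 2 := by positivity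
    rw [← div_eq_mul_inv, le_div_iff₀ h1', inv_mul_eq_div, div_le_iff₀ h1]
    linarith
  have key : (1 + x ^ 2) ^ (-(3/4) : ℝ) ≤ 2 ^ (3/4 : ℝ) * (1 + ‖x‖) ^ (-(3/2) : ℝ) := by
    have e1 : (1 + x ^ 2) ^ (-(3/4) : ℝ) = ((1 + x ^ 2)⁻¹) ^ (3/4 : ℝ) := by
      rw [Real.inv_rpow h1.le, ← Real.rpow_neg h1.le]
    have e2 : (2 * ((1 + ‖x‖) ^ 2)⁻¹) ^ (3/4 : ℝ)
        = 2 ^ (3/4 : ℝ) * (1 + ‖x‖) ^ (-(3/2) : ℝ) := by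
      rw [Real.mul_rpow (by norm_num) (by positivity)]
      congr 1
      rw [Real.inv_rpow (by positivity), ← Real.rpow_natCast (1 + ‖x‖) 2,
        ← Real.rpow_mul hN.le, ← Real.rpow_neg hN.le]
      norm_num
    rw [e1, ← e2]
    exact Real.rpow_le_rpow (by positivity) base (by norm_num)
  calc (4:ℝ) * (1 + x ^ 2) ^ (-(3/4) : ℝ) ≤ 4 * (2 ^ (3/4 : ℝ) * (1 + ‖x‖) ^ (-(3/2) : ℝ)) :=
        mul_le_mul_of_nonneg_left key (by norm_num)
    _ = 4 * 2 ^ (3/4 : ℝ) * (1 + ‖x‖) ^ (-(3/2) : ℝ) := by ring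

lemma cauchyPdf_pos {l s : ℝ} (hs : 0 < s) (x : ℝ) : 0 < cauchyPdf l s x := by
  unfold cauchyPdf
  have : 0 < s ^ 2 + (x - l) ^ 2 := by positivity
  positivity

lemma cauchyPdf_cont {l s : ℝ} (hs : 0 < s) : Continuous (cauchyPdf l s) := by
  apply Continuous.div continuous_const (by continuity)
  intro x
  have h1 : 0 < s ^ 2 + (x - l) ^ 2 := by positivity
  positivity

/-- bound of the Cauchy pdf by a multiple of `(1+x²)⁻¹` -/
lemma cauchyPdf_le (l : ℝ) {s : ℝ} (hs : 0 < s) (x : ℝ) :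
    cauchyPdf l s x ≤ (s / π * max ((1 + 2 * l ^ 2) / s ^ 2) 2) * (1 + x ^ 2)⁻¹ := by
  set K := max ((1 + 2 * l ^ 2) / s ^ 2) 2 with hK
  have hK1 : (1 + 2 * l ^ 2) ≤ K * s ^ 2 := by
    have : (1 + 2 * l ^ 2) / s ^ 2 ≤ K := le_max_left _ _
    calc (1 + 2 * l ^ 2) = (1 + 2 * l ^ 2) / s ^ 2 * s ^ 2 := by field_simp
    _ ≤ K * s ^ 2 := by nlinarith [sq_nonneg s]
  have hK2 : (2:ℝ) ≤ K := le_max_right _ _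
  have hKpos : (0:ℝ) < K := by linarith
  have hq : 0 < s ^ 2 + (x - l) ^ 2 := by positivity
  have h1 : (0:ℝ) < 1 + x ^ 2 := one_add_sq_pos x
  unfold cauchyPdf
  have hineq : 1 + x ^ 2 ≤ K * (s ^ 2 + (x - l) ^ 2) := by
    nlinarith [sq_nonneg (x - 2 * l), sq_nonneg (x - l), sq_nonneg l]
  have hrhs : s / π * K * (1 + x ^ 2)⁻¹ = (s * K) / (π * (1 + x ^ 2)) := by
    field_simp
  rw [hrhs, div_le_div_iff₀ (by positivity) (by positivity)]
  nlinarith [mul_le_mul_of_nonneg_left hineq (by positivity : (0:ℝ) ≤ s * π)]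

/-- |log((x-u)²+v²)| ≤ const + log(1+x²) -/
lemma abs_log_quad_le (u v x : ℝ) (hv : v ≠ 0) :
    |Real.log ((x - u) ^ 2 + v ^ 2)|
      ≤ |Real.log (v ^ 2)| + Real.log (max 2 (2 * u ^ 2 + v ^ 2)) + Real.log (1 + x ^ 2) := by
  set C := max 2 (2 * u ^ 2 + v ^ 2) with hC
  have hC2 : (2:ℝ) ≤ C := le_max_left _ _
  have hCu : 2 * u ^ 2 + v ^ 2 ≤ C := le_max_right _ _
  have hq : (0:ℝ) < (x - u) ^ 2 + v ^ 2 := by positivity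
  have h1 : (0:ℝ) < 1 + x ^ 2 := one_add_sq_pos x
  have hup : Real.log ((x - u) ^ 2 + v ^ 2) ≤ Real.log C + Real.log (1 + x ^ 2) := by
    rw [← Real.log_mul (by linarith) h1.ne']
    apply Real.log_le_log hq
    nlinarith [sq_nonneg (x + u), sq_nonneg x]
  have hlo : Real.log (v ^ 2) ≤ Real.log ((x - u) ^ 2 + v ^ 2) :=
    Real.log_le_log (by positivity) (by nlinarith [sq_nonneg (x - u)])
  have hCnn : 0 ≤ Real.log C := Real.log_nonneg (by linarith)
  have hlognn : 0 ≤ Real.log (1 + x ^ 2) := Real.log_nonneg (by nlinarith)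
  rw [abs_le]
  constructor
  · have : -|Real.log (v ^ 2)| ≤ Real.log (v ^ 2) := neg_abs_le _
    linarith
  · have : Real.log C ≤ Real.log C := le_rfl
    linarith [neg_abs_le (Real.log (v ^ 2)), abs_nonneg (Real.log (v ^ 2))]

/-- generic integrability: pdf times log of a positive quadratic -/
lemma integrable_pdf_mul_log {l s : ℝ} (hs : 0 < s) (u v : ℝ) (hv : v ≠ 0) :
    Integrable (fun x : ℝ => cauchyPdf l s x * Real.log ((x - u) ^ 2 + v ^ 2)) := by
  set Cp := s / π * max ((1 + 2 * l ^ 2) / s ^ 2) 2 with hCp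
  have hCpnn : 0 ≤ Cp := by
    have : (0:ℝ) < s / π := by positivity
    have h2 : (2:ℝ) ≤ max ((1 + 2 * l ^ 2) / s ^ 2) 2 := le_max_right _ _
    positivity
  set D := |Real.log (v ^ 2)| + Real.log (max 2 (2 * u ^ 2 + v ^ 2)) with hD
  have hcont : Continuous (fun x : ℝ => cauchyPdf l s x * Real.log ((x - u) ^ 2 + v ^ 2)) := by
    refine (cauchyPdf_cont hs).mul (Continuous.log (by continuity) (fun x => ?_))
    have : (0:ℝ) < (x - u) ^ 2 + v ^ 2 := by positivity
    exact this.ne'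
  have hbint : Integrable (fun x : ℝ =>
      Cp * ((1 + x ^ 2)⁻¹ * D) + Cp * ((1 + x ^ 2)⁻¹ * Real.log (1 + x ^ 2))) := by
    apply Integrable.add
    · exact (integrable_inv_one_add_sq.const_mul (Cp * D)).congr
        (by filter_upwards with x; ring)
    · exact (integrable_inv_one_add_sq_mul_log.const_mul Cp).congr
        (by filter_upwards with x; ring)
  apply hbint.mono' hcont.aestronglyMeasurable
  filter_upwards with x
  have hpdf := cauchyPdf_le l hs x
  have hpdfpos := cauchyPdf_pos (l:=l) hs x
  have h1 : (0:ℝ) < 1 + x ^ 2 := one_add_sq_pos x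
  have habs := abs_log_quad_le u v x hv
  rw [Real.norm_eq_abs, abs_mul, abs_of_pos hpdfpos]
  calc cauchyPdf l s x * |Real.log ((x - u) ^ 2 + v ^ 2)|
      ≤ (Cp * (1 + x ^ 2)⁻¹) * (D + Real.log (1 + x ^ 2)) := by
        apply mul_le_mul hpdf (by rw [hD]; linarith) (abs_nonneg _)
        positivity
    _ = Cp * ((1 + x ^ 2)⁻¹ * D) + Cp * ((1 + x ^ 2)⁻¹ * Real.log (1 + x ^ 2)) := by ring

/-- Cauchy pdf is integrable -/
lemma integrable_cauchyPdf {l s : ℝ} (hs : 0 < s) : Integrable (cauchyPdf l s) := by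
  apply (integrable_inv_one_add_sq.const_mul
    (s / π * max ((1 + 2 * l ^ 2) / s ^ 2) 2)).mono' (cauchyPdf_cont hs).aestronglyMeasurable
  filter_upwards with x
  rw [Real.norm_eq_abs, abs_of_pos (cauchyPdf_pos (l:=l) hs x)]
  exact cauchyPdf_le l hs x

lemma tendsto_inv_atBot_zero' : Tendsto (fun t : ℝ => t⁻¹) atBot (𝓝 0) := by
  have h : Tendsto (fun t : ℝ => -(-t)⁻¹) atBot (𝓝 (0:ℝ)) := by
    have := (tendsto_inv_atTop_zero (𝕜 := ℝ)).comp tendsto_neg_atBot_atTop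
    simpa using this.neg
  exact h.congr (by intro t; rw [inv_neg, neg_neg])

lemma tendsto_arctan_top : Tendsto Real.arctan atTop (𝓝 (π / 2)) :=
  tendsto_nhds_of_tendsto_nhdsWithin tendsto_arctan_atTop

lemma tendsto_arctan_bot : Tendsto Real.arctan atBot (𝓝 (-(π / 2))) :=
  tendsto_nhds_of_tendsto_nhdsWithin tendsto_arctan_atBot

/-- FTC on the whole real line. -/
lemma integral_eq_of_hasDerivAt_of_tendsto {f f' : ℝ → ℝ} {A B : ℝ}
    (hderiv : ∀ x, HasDerivAt f (f' x) x) (hint : Integrable f')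
    (hbot : Tendsto f atBot (𝓝 A)) (htop : Tendsto f atTop (𝓝 B)) :
    ∫ x, f' x = B - A := by
  rw [← intervalIntegral.integral_Iic_add_Ioi (b := (0:ℝ)) hint.integrableOn hint.integrableOn]
  have h1 : ∫ x in Iic (0:ℝ), f' x = f 0 - A :=
    integral_Iic_of_hasDerivAt_of_tendsto (hderiv 0).continuousAt.continuousWithinAt
      (fun x _ => hderiv x) hint.integrableOn hbot
  have h2 : ∫ x in Ioi (0:ℝ), f' x = B - f 0 :=
    integral_Ioi_of_hasDerivAt_of_tendsto (hderiv 0).continuousAt.continuousWithinAt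
      (fun x _ => hderiv x) hint.integrableOn htop
  rw [h1, h2]; ring

/-- `t/(1+t²) → 0` at `±∞`. -/
lemma tendsto_self_div (l : Filter ℝ)
    (hl : Tendsto (fun t : ℝ => t⁻¹) l (𝓝 0)) (hne : ∀ᶠ t in l, t ≠ 0) :
    Tendsto (fun t : ℝ => t / (1 + t ^ 2)) l (𝓝 0) := by
  have key : Tendsto (fun s : ℝ => s / (s ^ 2 + 1)) (𝓝 0) (𝓝 0) := by
    have : ContinuousAt (fun s : ℝ => s / (s ^ 2 + 1)) 0 :=
      ContinuousAt.div (by fun_prop) (by fun_prop) (by norm_num)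
    simpa using this.tendsto
  apply (key.comp hl).congr'
  filter_upwards [hne] with t ht
  have h1 : (1:ℝ) + t ^ 2 ≠ 0 := by positivity
  show t⁻¹ / ((t⁻¹) ^ 2 + 1) = t / (1 + t ^ 2)
  field_simp

/-- the ratio `(1+t²)/((t-u)²+v²)` tends to 1 at `±∞` -/
lemma tendsto_ratio (u v : ℝ) (hv : v ≠ 0) (l : Filter ℝ)
    (hl : Tendsto (fun t : ℝ => t⁻¹) l (𝓝 0)) (hne : ∀ᶠ t in l, t ≠ 0) :
    Tendsto (fun t : ℝ => (1 + t ^ 2) / ((t - u) ^ 2 + v ^ 2)) l (𝓝 1) := by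
  have key : Tendsto (fun s : ℝ => (s ^ 2 + 1) / ((1 - u * s) ^ 2 + v ^ 2 * s ^ 2)) (𝓝 0)
      (𝓝 1) := by
    have : ContinuousAt (fun s : ℝ => (s ^ 2 + 1) / ((1 - u * s) ^ 2 + v ^ 2 * s ^ 2)) 0 := by
      apply ContinuousAt.div (by fun_prop) (by fun_prop)
      norm_num
    have h0 : ((0:ℝ) ^ 2 + 1) / ((1 - u * 0) ^ 2 + v ^ 2 * 0 ^ 2) = 1 := by norm_num
    simpa [h0] using this.tendsto
  apply (key.comp hl).congr'
  filter_upwards [hne] with t ht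
  have hq : ((t - u) ^ 2 + v ^ 2) ≠ 0 := by positivity
  have hq2 : ((1 - u * t⁻¹) ^ 2 + v ^ 2 * (t⁻¹) ^ 2) ≠ 0 := by
    have ht2 : (t⁻¹) ^ 2 ≠ 0 := pow_ne_zero _ (inv_ne_zero ht)
    positivity
  show ((t⁻¹) ^ 2 + 1) / ((1 - u * t⁻¹) ^ 2 + v ^ 2 * (t⁻¹) ^ 2) = (1 + t ^ 2) / ((t - u) ^ 2 + v ^ 2)
  field_simp






/-- Lemma A: the partial fraction integral. -/
lemma integral_rat (u v : ℝ) (hv : 0 < v) :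
    ∫ x : ℝ, ((1 + x ^ 2) * ((x - u) ^ 2 + v ^ 2))⁻¹
      = π * (1 + v) / (v * (u ^ 2 + (1 + v) ^ 2)) := by
  have hvne : v ≠ 0 := hv.ne'
  have hint : Integrable (fun x : ℝ => ((1 + x ^ 2) * ((x - u) ^ 2 + v ^ 2))⁻¹) := by
    apply (integrable_inv_one_add_sq.const_mul (v ^ 2)⁻¹).mono'
    · apply Continuous.aestronglyMeasurable
      apply Continuous.inv₀ (by fun_prop)
      intro x
      have h1 : (0:ℝ) < 1 + x ^ 2 := by positivity
      have h2 : (0:ℝ) < (x - u) ^ 2 + v ^ 2 := by positivity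
      positivity
    · filter_upwards with x
      have h1 : (0:ℝ) < 1 + x ^ 2 := by positivity
      have h2 : (0:ℝ) < (x - u) ^ 2 + v ^ 2 := by positivity
      rw [Real.norm_eq_abs, abs_of_pos (by positivity), mul_inv, mul_comm]
      apply mul_le_mul_of_nonneg_right _ (by positivity)
      apply inv_anti₀ (by positivity)
      nlinarith [sq_nonneg (x - u)]
  by_cases hdeg : u = 0 ∧ v = 1
  · obtain ⟨rfl, rfl⟩ := hdeg
    have hH : ∀ x : ℝ, HasDerivAt (fun t : ℝ => (t / (1 + t ^ 2) + Real.arctan t) / 2)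
        (((1 + x ^ 2) * ((x - 0) ^ 2 + 1 ^ 2))⁻¹) x := by
      intro x
      have h1 : (0:ℝ) < 1 + x ^ 2 := by positivity
      have hd1 : HasDerivAt (fun t : ℝ => t / (1 + t ^ 2))
          ((1 * (1 + x ^ 2) - x * (2 * x)) / (1 + x ^ 2) ^ 2) x := by
        exact (hasDerivAt_id' x).div (by simpa using
          ((hasDerivAt_pow 2 x).const_add 1)) h1.ne'
      have := (hd1.add (Real.hasDerivAt_arctan x)).div_const 2
      refine this.congr_deriv ?_
      field_simp
      ring
    have hbot : Tendsto (fun t : ℝ => (t / (1 + t ^ 2) + Real.arctan t) / 2) atBot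
        (𝓝 ((0 + -(π / 2)) / 2)) :=
      ((tendsto_self_div atBot tendsto_inv_atBot_zero' (eventually_ne_atBot 0)).add
        tendsto_arctan_bot).div_const 2
    have htop : Tendsto (fun t : ℝ => (t / (1 + t ^ 2) + Real.arctan t) / 2) atTop
        (𝓝 ((0 + π / 2) / 2)) :=
      ((tendsto_self_div atTop tendsto_inv_atTop_zero (eventually_ne_atTop 0)).add
        tendsto_arctan_top).div_const 2
    rw [integral_eq_of_hasDerivAt_of_tendsto hH hint hbot htop]
    norm_num
    ring
  · have hK2 : (0:ℝ) < u ^ 2 + (v - 1) ^ 2 := by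
      rcases not_and_or.mp hdeg with h | h
      · positivity
      · have h' : v - 1 ≠ 0 := sub_ne_zero.mpr h
        positivity
    have hK1 : (0:ℝ) < u ^ 2 + (1 + v) ^ 2 := by
      have h' : 1 + v ≠ 0 := by positivity
      positivity
    set K := (u ^ 2 + (1 + v) ^ 2) * (u ^ 2 + (v - 1) ^ 2) with hKdef
    have hKpos : (0:ℝ) < K := mul_pos hK1 hK2
    set H : ℝ → ℝ := fun t =>
      u / K * (Real.log (1 + t ^ 2) - Real.log ((t - u) ^ 2 + v ^ 2))
      + (u ^ 2 + v ^ 2 - 1) / K * Real.arctan t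
      + (1 + u ^ 2 - v ^ 2) / (v * K) * Real.arctan ((t - u) / v) with hHdef
    have hH : ∀ x : ℝ, HasDerivAt H (((1 + x ^ 2) * ((x - u) ^ 2 + v ^ 2))⁻¹) x := by
      intro x
      have h1 : (0:ℝ) < 1 + x ^ 2 := by positivity
      have hQ : (0:ℝ) < (x - u) ^ 2 + v ^ 2 := by positivity
      have d1 : HasDerivAt (fun t : ℝ => Real.log (1 + t ^ 2)) (2 * x / (1 + x ^ 2)) x := by
        have hi : HasDerivAt (fun t : ℝ => 1 + t ^ 2) (2 * x) x := by
          simpa using (hasDerivAt_pow 2 x).const_add 1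
        simpa using hi.log h1.ne'
      have d2 : HasDerivAt (fun t : ℝ => Real.log ((t - u) ^ 2 + v ^ 2))
          (2 * (x - u) / ((x - u) ^ 2 + v ^ 2)) x := by
        have hi : HasDerivAt (fun t : ℝ => (t - u) ^ 2 + v ^ 2) (2 * (x - u)) x := by
          simpa using (((hasDerivAt_id x).sub_const u).pow 2).add_const (v ^ 2)
        simpa using hi.log hQ.ne'
      have d3 := Real.hasDerivAt_arctan x
      have d4 : HasDerivAt (fun t : ℝ => Real.arctan ((t - u) / v))
          ((1 / v) / (1 + ((x - u) / v) ^ 2)) x := by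
        have hi : HasDerivAt (fun t : ℝ => (t - u) / v) (1 / v) x := by
          simpa [one_div] using ((hasDerivAt_id x).sub_const u).div_const v
        simpa [div_eq_mul_inv, mul_comm] using hi.arctan
      have total := (((d1.sub d2).const_mul (u / K)).add
        (d3.const_mul ((u ^ 2 + v ^ 2 - 1) / K))).add
        (d4.const_mul ((1 + u ^ 2 - v ^ 2) / (v * K)))
      refine total.congr_deriv ?_
      rw [hKdef]
      have h2 : (0:ℝ) < 1 + ((x - u) / v) ^ 2 := by positivity
      field_simp
      ring
    have hlogTop : Tendsto
        (fun t : ℝ => Real.log (1 + t ^ 2) - Real.log ((t - u) ^ 2 + v ^ 2)) atTop (𝓝 0) := by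
      have hr := tendsto_ratio u v hvne atTop tendsto_inv_atTop_zero (eventually_ne_atTop 0)
      have h := (Real.continuousAt_log one_ne_zero).tendsto.comp hr
      rw [Real.log_one] at h
      apply h.congr
      intro t
      exact Real.log_div (by positivity) (by positivity)
    have hlogBot : Tendsto
        (fun t : ℝ => Real.log (1 + t ^ 2) - Real.log ((t - u) ^ 2 + v ^ 2)) atBot (𝓝 0) := by
      have hr := tendsto_ratio u v hvne atBot tendsto_inv_atBot_zero' (eventually_ne_atBot 0)
      have h := (Real.continuousAt_log one_ne_zero).tendsto.comp hr
      rw [Real.log_one] at h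
      apply h.congr
      intro t
      exact Real.log_div (by positivity) (by positivity)
    have hinnerTop : Tendsto (fun t : ℝ => (t - u) / v) atTop atTop := by
      apply Tendsto.atTop_div_const hv
      simpa [sub_eq_add_neg] using tendsto_atTop_add_const_right atTop (-u) tendsto_id
    have hinnerBot : Tendsto (fun t : ℝ => (t - u) / v) atBot atBot := by
      apply Tendsto.atBot_div_const hv
      simpa [sub_eq_add_neg] using tendsto_atBot_add_const_right atBot (-u) tendsto_id
    have htop : Tendsto H atTop (𝓝 ((u / K * 0 + (u ^ 2 + v ^ 2 - 1) / K * (π / 2))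
        + (1 + u ^ 2 - v ^ 2) / (v * K) * (π / 2))) := by
      rw [hHdef]
      exact ((hlogTop.const_mul (u / K)).add
        (tendsto_arctan_top.const_mul ((u ^ 2 + v ^ 2 - 1) / K))).add
        ((tendsto_arctan_top.comp hinnerTop).const_mul ((1 + u ^ 2 - v ^ 2) / (v * K)))
    have hbot : Tendsto H atBot (𝓝 ((u / K * 0 + (u ^ 2 + v ^ 2 - 1) / K * (-(π / 2)))
        + (1 + u ^ 2 - v ^ 2) / (v * K) * (-(π / 2)))) := by
      rw [hHdef]
      exact ((hlogBot.const_mul (u / K)).add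
        (tendsto_arctan_bot.const_mul ((u ^ 2 + v ^ 2 - 1) / K))).add
        ((tendsto_arctan_bot.comp hinnerBot).const_mul ((1 + u ^ 2 - v ^ 2) / (v * K)))
    rw [integral_eq_of_hasDerivAt_of_tendsto hH hint hbot htop, hKdef]
    have hpi : π ≠ 0 := Real.pi_ne_zero
    field_simp
    ring

/-- change of variables for whole-line integrals -/
lemma integral_scale (f : ℝ → ℝ) (l : ℝ) {s : ℝ} (hs : 0 < s) :
    ∫ x, f x = s * ∫ t, f (s * t + l) := by
  have h1 : ∫ t, f (s * t + l) = |s⁻¹| • ∫ y, f (y + l) :=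
    MeasureTheory.Measure.integral_comp_mul_left (fun y => f (y + l)) s
  have h2 : ∫ y, f (y + l) = ∫ x, f x := by
    simpa [add_comm] using MeasureTheory.integral_add_left_eq_self f l
  rw [h1, h2, abs_of_pos (inv_pos.mpr hs), smul_eq_mul]
  field_simp

lemma cauchyPdf_scale {l s : ℝ} (hs : 0 < s) (t : ℝ) :
    cauchyPdf l s (s * t + l) = s⁻¹ * cauchyPdf 0 1 t := by
  unfold cauchyPdf
  have h1 : (0:ℝ) < 1 + t ^ 2 := by positivity
  field_simp
  ring

lemma cauchyPdf_zero_one (t : ℝ) : cauchyPdf 0 1 t = (π * (1 + t ^ 2))⁻¹ := by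
  unfold cauchyPdf
  rw [one_div]
  congr 1
  ring

lemma integral_cauchyPdf_eq_one {l s : ℝ} (hs : 0 < s) : ∫ x, cauchyPdf l s x = 1 := by
  rw [integral_scale (cauchyPdf l s) l hs]
  have : ∀ t : ℝ, cauchyPdf l s (s * t + l) = s⁻¹ * π⁻¹ * (1 + t ^ 2)⁻¹ := by
    intro t
    rw [cauchyPdf_scale hs, cauchyPdf_zero_one, mul_inv]
    ring
  simp_rw [this]
  rw [integral_const_mul, integral_univ_inv_one_add_sq]
  field_simp

/-- the function `v ↦ ∫ pdf · log((x-u)²+v²)` -/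
noncomputable def Fv (u v : ℝ) : ℝ := ∫ x, cauchyPdf 0 1 x * Real.log ((x - u) ^ 2 + v ^ 2)

lemma hasDerivAt_Fv (u : ℝ) {v : ℝ} (hv : 0 < v) :
    HasDerivAt (Fv u) (2 * (1 + v) / (u ^ 2 + (1 + v) ^ 2)) v := by
  have hder := hasDerivAt_integral_of_dominated_loc_of_deriv_le (μ := volume)
    (F := fun w x => cauchyPdf 0 1 x * Real.log ((x - u) ^ 2 + w ^ 2))
    (F' := fun w x => cauchyPdf 0 1 x * (2 * w / ((x - u) ^ 2 + w ^ 2)))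
    (x₀ := v) (s := Metric.ball v (v / 2)) (bound := fun x => cauchyPdf 0 1 x * (4 / v))
    (Metric.ball_mem_nhds v (half_pos hv)) ?_ ?_ ?_ ?_ ?_ ?_
  · have h2 := hder.2
    have heq : (∫ x, cauchyPdf 0 1 x * (2 * v / ((x - u) ^ 2 + v ^ 2)))
        = 2 * (1 + v) / (u ^ 2 + (1 + v) ^ 2) := by
      have hpt : ∀ x : ℝ, cauchyPdf 0 1 x * (2 * v / ((x - u) ^ 2 + v ^ 2))
          = (2 * v / π) * ((1 + x ^ 2) * ((x - u) ^ 2 + v ^ 2))⁻¹ := by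
        intro x
        rw [cauchyPdf_zero_one]
        have h1 : (0:ℝ) < 1 + x ^ 2 := by positivity
        have h2 : (0:ℝ) < (x - u) ^ 2 + v ^ 2 := by positivity
        field_simp
      simp_rw [hpt]
      rw [integral_const_mul, integral_rat u v hv]
      have h3 : (0:ℝ) < u ^ 2 + (1 + v) ^ 2 := by positivity
      field_simp
    rw [heq] at h2
    exact h2
  · filter_upwards [Metric.ball_mem_nhds v (half_pos hv)] with w hw
    rw [Metric.mem_ball, Real.dist_eq, abs_lt] at hw
    have hwpos : 0 < w := by linarith [hw.1]
    apply Continuous.aestronglyMeasurable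
    refine (cauchyPdf_cont one_pos).mul (Continuous.log (by fun_prop) fun x => ?_)
    have : (0:ℝ) < (x - u) ^ 2 + w ^ 2 := by positivity
    exact this.ne'
  · exact integrable_pdf_mul_log one_pos u v hv.ne'
  · apply Continuous.aestronglyMeasurable
    refine (cauchyPdf_cont one_pos).mul (Continuous.div continuous_const (by fun_prop) fun x => ?_)
    have : (0:ℝ) < (x - u) ^ 2 + v ^ 2 := by positivity
    exact this.ne'
  · filter_upwards with x
    intro w hw
    rw [Metric.mem_ball, Real.dist_eq, abs_lt] at hw
    have hwpos : 0 < w := by linarith [hw.1]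
    have hQ : (0:ℝ) < (x - u) ^ 2 + w ^ 2 := by positivity
    rw [Real.norm_eq_abs, abs_mul, abs_of_pos (cauchyPdf_pos one_pos x),
      abs_of_pos (by positivity : (0:ℝ) < 2 * w / ((x - u) ^ 2 + w ^ 2))]
    apply mul_le_mul_of_nonneg_left _ (le_of_lt (cauchyPdf_pos one_pos x))
    rw [div_le_div_iff₀ hQ hv]
    nlinarith [sq_nonneg (x - u), hw.1]
  · exact (integrable_cauchyPdf one_pos).mul_const (4 / v)
  · filter_upwards with x
    intro w hw
    rw [Metric.mem_ball, Real.dist_eq, abs_lt] at hw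
    have hwpos : 0 < w := by linarith [hw.1]
    have hQ : (0:ℝ) < (x - u) ^ 2 + w ^ 2 := by positivity
    have hi : HasDerivAt (fun w : ℝ => (x - u) ^ 2 + w ^ 2) (2 * w) w := by
      simpa using (hasDerivAt_pow 2 w).const_add ((x - u) ^ 2)
    have := (hi.log hQ.ne').const_mul (cauchyPdf 0 1 x)
    simpa [mul_comm, mul_div_assoc] using this

/-- anchor: `Fv u v - log (v²) → 0` as `v → ∞` -/
lemma tendsto_Fv_sub (u : ℝ) :
    Tendsto (fun v : ℝ => Fv u v - Real.log (v ^ 2)) atTop (𝓝 0) := by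
  set c := Real.log (max 2 (2 * u ^ 2 + 1 ^ 2)) with hc
  have hcnn : 0 ≤ c := Real.log_nonneg (le_trans (by norm_num) (le_max_left _ _))
  have hbint : Integrable (fun x : ℝ =>
      cauchyPdf 0 1 x * (c + Real.log ((x - u) ^ 2 + 1 ^ 2))) := by
    have h1 := (integrable_cauchyPdf (l := 0) one_pos).mul_const c
    have h2 := integrable_pdf_mul_log (l := 0) one_pos u 1 one_ne_zero
    exact (h1.add h2).congr (by filter_upwards with x; simp only [Pi.add_apply]; ring)
  have key : Tendsto (fun v : ℝ =>
      ∫ x, cauchyPdf 0 1 x * (Real.log ((x - u) ^ 2 + v ^ 2) - Real.log (v ^ 2)))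
      atTop (𝓝 (∫ x : ℝ, (0:ℝ))) := by
    apply tendsto_integral_filter_of_dominated_convergence
      (fun x => cauchyPdf 0 1 x * (c + Real.log ((x - u) ^ 2 + 1 ^ 2)))
    · filter_upwards [eventually_gt_atTop (0:ℝ)] with v hv
      apply Continuous.aestronglyMeasurable
      apply (cauchyPdf_cont one_pos).mul
      apply Continuous.sub _ continuous_const
      refine Continuous.log (by fun_prop) fun x => ?_
      have : (0:ℝ) < (x - u) ^ 2 + v ^ 2 := by positivity
      exact this.ne'
    · filter_upwards [eventually_ge_atTop (1:ℝ)] with v hv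
      filter_upwards with x
      have hv0 : (0:ℝ) < v := by linarith
      have hQ : (0:ℝ) < (x - u) ^ 2 + v ^ 2 := by positivity
      have hQ1 : (0:ℝ) < (x - u) ^ 2 + 1 ^ 2 := by positivity
      have hdiff : Real.log ((x - u) ^ 2 + v ^ 2) - Real.log (v ^ 2)
          = Real.log (((x - u) ^ 2 + v ^ 2) / v ^ 2) := by
        rw [Real.log_div hQ.ne' (by positivity)]
      have hnn : 0 ≤ Real.log ((x - u) ^ 2 + v ^ 2) - Real.log (v ^ 2) := by
        rw [hdiff]
        apply Real.log_nonneg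
        rw [le_div_iff₀ (by positivity)]
        nlinarith [sq_nonneg (x - u)]
      have hub : Real.log ((x - u) ^ 2 + v ^ 2) - Real.log (v ^ 2)
          ≤ Real.log ((x - u) ^ 2 + 1 ^ 2) := by
        rw [hdiff]
        apply Real.log_le_log (by positivity)
        rw [div_le_iff₀ (by positivity)]
        nlinarith [sq_nonneg (x - u), sq_nonneg (v - 1), sq_nonneg ((x-u)*(v-1))]
      have hlogn : 0 ≤ Real.log ((x - u) ^ 2 + 1 ^ 2) := by
        apply Real.log_nonneg
        nlinarith [sq_nonneg (x - u)]
      rw [Real.norm_eq_abs, abs_mul, abs_of_pos (cauchyPdf_pos one_pos x),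
        abs_of_nonneg hnn]
      apply mul_le_mul_of_nonneg_left _ (le_of_lt (cauchyPdf_pos one_pos x))
      linarith
    · exact hbint
    · filter_upwards with x
      have hlim : Tendsto (fun v : ℝ => Real.log (1 + ((x - u) * v⁻¹) ^ 2)) atTop (𝓝 0) := by
        have h1 : Tendsto (fun v : ℝ => (x - u) * v⁻¹) atTop (𝓝 0) := by
          simpa using tendsto_inv_atTop_zero.const_mul (x - u)
        have h2 : Tendsto (fun v : ℝ => 1 + ((x - u) * v⁻¹) ^ 2) atTop (𝓝 1) := by
          have := ((h1.mul h1)).const_add 1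
          simpa [pow_two] using this
        have h3 := (Real.continuousAt_log one_ne_zero).tendsto.comp h2
        simpa [Function.comp_def] using h3
      have := hlim.const_mul (cauchyPdf 0 1 x)
      rw [mul_zero] at this
      apply this.congr'
      filter_upwards [eventually_gt_atTop (0:ℝ)] with v hv
      congr 1
      have hQ : (0:ℝ) < (x - u) ^ 2 + v ^ 2 := by positivity
      rw [eq_comm, sub_eq_iff_eq_add, ← Real.log_mul (by positivity) (by positivity)]
      congr 1
      field_simp
      ring
  rw [integral_zero] at key
  apply key.congr'
  filter_upwards [eventually_gt_atTop (0:ℝ)] with v hv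
  unfold Fv
  simp_rw [mul_sub]
  rw [integral_sub (integrable_pdf_mul_log one_pos u v hv.ne')
    ((integrable_cauchyPdf one_pos).mul_const _), integral_mul_const,
    integral_cauchyPdf_eq_one one_pos, one_mul]

/-- the value of `Fv`. -/
lemma Fv_eq (u : ℝ) {v : ℝ} (hv : 0 < v) :
    Fv u v = Real.log (u ^ 2 + (1 + v) ^ 2) := by
  set g : ℝ → ℝ := fun w => Real.log (u ^ 2 + (1 + w) ^ 2) with hg
  have hgd : ∀ w : ℝ, 0 < w →
      HasDerivAt g (2 * (1 + w) / (u ^ 2 + (1 + w) ^ 2)) w := by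
    intro w hw
    have hpos : (0:ℝ) < u ^ 2 + (1 + w) ^ 2 := by positivity
    have hi : HasDerivAt (fun t : ℝ => u ^ 2 + (1 + t) ^ 2) (2 * (1 + w)) w := by
      have h1 : HasDerivAt (fun t : ℝ => (1 + t)) 1 w := by
        simpa using (hasDerivAt_id w).const_add 1
      simpa using (h1.pow 2).const_add (u ^ 2)
    simpa [mul_comm, mul_div_assoc] using hi.log hpos.ne'
  have hconst : ∀ w, v ≤ w → Fv u w - g w = Fv u v - g v := by
    intro w hw
    have hstep : ∫ x in v..w, (0:ℝ)
        = (Fv u w - g w) - (Fv u v - g v) := by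
      apply intervalIntegral.integral_eq_sub_of_hasDerivAt
      · intro x hx
        rw [uIcc_of_le hw] at hx
        have hx0 : 0 < x := lt_of_lt_of_le hv hx.1
        have := (hasDerivAt_Fv u hx0).sub (hgd x hx0)
        exact this.congr_deriv (sub_self _)
      · exact intervalIntegrable_const
    rw [intervalIntegral.integral_zero] at hstep
    linarith [hstep]
  have htail : Tendsto (fun w : ℝ => Fv u w - g w) atTop (𝓝 0) := by
    have hgt : Tendsto (fun w : ℝ => g w - Real.log (w ^ 2)) atTop (𝓝 0) := by
      have key : Tendsto (fun s : ℝ => u ^ 2 * s ^ 2 + (s + 1) ^ 2) (𝓝 0) (𝓝 1) := by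
        have : ContinuousAt (fun s : ℝ => u ^ 2 * s ^ 2 + (s + 1) ^ 2) 0 := by fun_prop
        have h0 : u ^ 2 * (0:ℝ) ^ 2 + ((0:ℝ) + 1) ^ 2 = 1 := by norm_num
        simpa [h0] using this.tendsto
      have h2 := (Real.continuousAt_log one_ne_zero).tendsto.comp
        (key.comp tendsto_inv_atTop_zero)
      rw [Real.log_one] at h2
      apply h2.congr'
      filter_upwards [eventually_gt_atTop (0:ℝ)] with w hw
      have hpos : (0:ℝ) < u ^ 2 + (1 + w) ^ 2 := by positivity
      show Real.log (u ^ 2 * (w⁻¹) ^ 2 + (w⁻¹ + 1) ^ 2) = g w - Real.log (w ^ 2)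
      rw [hg, ← Real.log_div hpos.ne' (by positivity)]
      congr 1
      field_simp
    have := (tendsto_Fv_sub u).sub hgt
    rw [sub_zero] at this
    apply this.congr
    intro w
    ring
  have hconst' : Tendsto (fun w : ℝ => Fv u w - g w) atTop (𝓝 (Fv u v - g v)) := by
    apply tendsto_const_nhds.congr'
    filter_upwards [eventually_ge_atTop v] with w hw
    exact (hconst w hw).symm
  have := tendsto_nhds_unique hconst' htail
  have : Fv u v = g v := by linarith [this]
  rw [this]

/-- expectation of a log-quadratic under a Cauchy distribution -/
lemma integral_pdf_log (l a : ℝ) {s b : ℝ} (hs : 0 < s) (hb : 0 < b) :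
    ∫ x, cauchyPdf l s x * Real.log ((x - a) ^ 2 + b ^ 2)
      = Real.log ((l - a) ^ 2 + (s + b) ^ 2) := by
  have hv : 0 < b / s := div_pos hb hs
  rw [integral_scale (fun x => cauchyPdf l s x * Real.log ((x - a) ^ 2 + b ^ 2)) l hs]
  have hpt : ∀ t : ℝ, cauchyPdf l s (s * t + l) * Real.log ((s * t + l - a) ^ 2 + b ^ 2)
      = s⁻¹ * (cauchyPdf 0 1 t * Real.log (s ^ 2)
          + cauchyPdf 0 1 t * Real.log ((t - (a - l) / s) ^ 2 + (b / s) ^ 2)) := by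
    intro t
    rw [cauchyPdf_scale hs]
    have harg : (s * t + l - a) ^ 2 + b ^ 2
        = s ^ 2 * ((t - (a - l) / s) ^ 2 + (b / s) ^ 2) := by
      field_simp
      ring
    have hq : (0:ℝ) < (t - (a - l) / s) ^ 2 + (b / s) ^ 2 := by positivity
    rw [harg, Real.log_mul (by positivity) hq.ne']
    ring
  simp_rw [hpt]
  rw [integral_const_mul, integral_add ((integrable_cauchyPdf one_pos).mul_const _)
    (integrable_pdf_mul_log one_pos _ _ hv.ne'), integral_mul_const,
    integral_cauchyPdf_eq_one one_pos, one_mul]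
  have hFv := Fv_eq ((a - l) / s) hv
  rw [Fv] at hFv
  rw [hFv, ← Real.log_mul (by positivity) (by positivity)]
  rw [← mul_assoc, mul_inv_cancel₀ hs.ne', one_mul]
  congr 1
  field_simp
  ring

end KLC

end KLCAux

open KLC Filter Set Topology in
/-- Closed form of the Kullback–Leibler divergence from a Cauchy density to a
mixture of two Cauchy densities. -/
theorem kl_cauchy_to_mixture (l0 l1 s0 s1 θ : ℝ) (hs0 : 0 < s0) (hs1 : 0 < s1)
    (hθ : θ ∈ Set.Ioo (0 : ℝ) 1) :
    ∫ x : ℝ, cauchyPdf l0 s0 x *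
        Real.log (cauchyPdf l0 s0 x /
          ((1 - θ) * cauchyPdf l0 s0 x + θ * cauchyPdf l1 s1 x)) =
      Real.log (((l0 - l1) ^ 2 + (s0 + s1) ^ 2) /
        ((1 - θ) * (s0 ^ 2 + s1 ^ 2 + (l0 - l1) ^ 2) + 2 * θ * s0 * s1 +
          2 * Real.sqrt (s0 ^ 2 * s1 ^ 2 +
            s0 * s1 * ((s0 - s1) ^ 2 + (l0 - l1) ^ 2) * θ * (1 - θ)))) := by
  obtain ⟨hθ0, hθ1⟩ := hθ
  have hθ1' : 0 < 1 - θ := by linarith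
  set A := (1 - θ) * s0 + θ * s1 with hA
  have hApos : 0 < A := by rw [hA]; positivity
  set S := s0 ^ 2 * s1 ^ 2 + s0 * s1 * ((s0 - s1) ^ 2 + (l0 - l1) ^ 2) * θ * (1 - θ) with hS
  have hSpos : 0 < S := by
    rw [hS]
    have h1 : 0 < s0 ^ 2 * s1 ^ 2 := by positivity
    have h2 : 0 ≤ s0 * s1 * ((s0 - s1) ^ 2 + (l0 - l1) ^ 2) * θ * (1 - θ) := by positivity
    linarith
  set a := ((1 - θ) * s0 * l1 + θ * s1 * l0) / A with ha
  set b := Real.sqrt S / A with hb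
  have hsqrtpos : 0 < Real.sqrt S := Real.sqrt_pos.mpr hSpos
  have hbpos : 0 < b := div_pos hsqrtpos hApos
  have hsqS : Real.sqrt S ^ 2 = S := Real.sq_sqrt hSpos.le
  -- quadratic identity
  have hquad : ∀ x : ℝ, (1 - θ) * s0 * (s1 ^ 2 + (x - l1) ^ 2)
      + θ * s1 * (s0 ^ 2 + (x - l0) ^ 2) = A * ((x - a) ^ 2 + b ^ 2) := by
    intro x
    rw [hb, div_pow, hsqS, ha, hS, hA]
    have hA0 : ((1:ℝ) - θ) * s0 + θ * s1 ≠ 0 := by rw [← hA]; exact hApos.ne'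
    field_simp
    ring
  -- pointwise rewriting of the integrand
  have hpt : ∀ x : ℝ, cauchyPdf l0 s0 x *
      Real.log (cauchyPdf l0 s0 x /
        ((1 - θ) * cauchyPdf l0 s0 x + θ * cauchyPdf l1 s1 x))
      = (cauchyPdf l0 s0 x * Real.log s0
          + cauchyPdf l0 s0 x * Real.log ((x - l1) ^ 2 + s1 ^ 2))
        - (cauchyPdf l0 s0 x * Real.log A
          + cauchyPdf l0 s0 x * Real.log ((x - a) ^ 2 + b ^ 2)) := by
    intro x
    have hQ0 : (0:ℝ) < s0 ^ 2 + (x - l0) ^ 2 := by positivity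
    have hQ1 : (0:ℝ) < s1 ^ 2 + (x - l1) ^ 2 := by positivity
    have hW : (0:ℝ) < (x - a) ^ 2 + b ^ 2 := by positivity
    have hratio : cauchyPdf l0 s0 x /
        ((1 - θ) * cauchyPdf l0 s0 x + θ * cauchyPdf l1 s1 x)
        = s0 * ((x - l1) ^ 2 + s1 ^ 2) / (A * ((x - a) ^ 2 + b ^ 2)) := by
      have hmix : (1 - θ) * cauchyPdf l0 s0 x + θ * cauchyPdf l1 s1 x
          = A * ((x - a) ^ 2 + b ^ 2) / (π * (s0 ^ 2 + (x - l0) ^ 2)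
              * (s1 ^ 2 + (x - l1) ^ 2)) := by
        rw [← hquad x]
        unfold cauchyPdf
        field_simp
      rw [hmix]
      unfold cauchyPdf
      have hAW : (0:ℝ) < A * ((x - a) ^ 2 + b ^ 2) := by positivity
      rw [div_div_div_eq, div_eq_div_iff (by positivity) (by positivity)]
      ring
    have hAW : (0:ℝ) < A * ((x - a) ^ 2 + b ^ 2) := by positivity
    rw [hratio, Real.log_div (by positivity) hAW.ne',
      Real.log_mul hs0.ne' (by positivity : (0:ℝ) < (x - l1) ^ 2 + s1 ^ 2).ne',
      Real.log_mul hApos.ne' (by positivity : (0:ℝ) < (x - a) ^ 2 + b ^ 2).ne']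
    ring
  rw [integral_congr_ae (ae_of_all _ hpt)]
  have I1 := (integrable_cauchyPdf (l:=l0) hs0).mul_const (Real.log s0)
  have I2 := integrable_pdf_mul_log (l:=l0) hs0 l1 s1 hs1.ne'
  have I3 := (integrable_cauchyPdf (l:=l0) hs0).mul_const (Real.log A)
  have I4 := integrable_pdf_mul_log (l:=l0) hs0 a b hbpos.ne'
  have I12 : Integrable (fun x => cauchyPdf l0 s0 x * Real.log s0
      + cauchyPdf l0 s0 x * Real.log ((x - l1) ^ 2 + s1 ^ 2)) := I1.add I2
  have I34 : Integrable (fun x => cauchyPdf l0 s0 x * Real.log A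
      + cauchyPdf l0 s0 x * Real.log ((x - a) ^ 2 + b ^ 2)) := I3.add I4
  rw [integral_sub I12 I34, integral_add I1 I2, integral_add I3 I4,
    integral_mul_const, integral_mul_const, integral_cauchyPdf_eq_one hs0, one_mul, one_mul,
    integral_pdf_log l0 l1 hs0 hs1, integral_pdf_log l0 a hs0 hbpos]
  set den := (1 - θ) * (s0 ^ 2 + s1 ^ 2 + (l0 - l1) ^ 2) + 2 * θ * s0 * s1
      + 2 * Real.sqrt S with hden
  have hdenpos : 0 < den := by
    rw [hden]
    have h1 : 0 < (1 - θ) * (s0 ^ 2 + s1 ^ 2 + (l0 - l1) ^ 2) := by positivity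
    have h2 : 0 < 2 * θ * s0 * s1 := by positivity
    linarith
  have hnum : (0:ℝ) < (l0 - l1) ^ 2 + (s0 + s1) ^ 2 := by positivity
  have hAb : A * b = Real.sqrt S := by
    rw [hb]
    field_simp
  have hkey : A * ((l0 - a) ^ 2 + (s0 + b) ^ 2) = s0 * den := by
    have h1 := hquad l0
    calc A * ((l0 - a) ^ 2 + (s0 + b) ^ 2)
        = A * ((l0 - a) ^ 2 + b ^ 2) + A * s0 ^ 2 + 2 * s0 * (A * b) := by ring
      _ = ((1 - θ) * s0 * (s1 ^ 2 + (l0 - l1) ^ 2)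
            + θ * s1 * (s0 ^ 2 + (l0 - l0) ^ 2)) + A * s0 ^ 2 + 2 * s0 * (A * b) := by
          rw [h1]
      _ = s0 * den := by rw [hAb, hden, hA]; ring
  have hWl : (0:ℝ) < (l0 - a) ^ 2 + (s0 + b) ^ 2 := by positivity
  rw [Real.log_div hnum.ne' hdenpos.ne']
  have hlogden : Real.log den
      = Real.log A + Real.log ((l0 - a) ^ 2 + (s0 + b) ^ 2) - Real.log s0 := by
    have hd : den = A * ((l0 - a) ^ 2 + (s0 + b) ^ 2) / s0 := by
      rw [eq_div_iff hs0.ne']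
      linarith [hkey]
    rw [hd, Real.log_div (by positivity) hs0.ne', Real.log_mul hApos.ne' hWl.ne']
  rw [hlogden]
  ring
end

section
/- Let l0,l1 ∈ ℝ, s0,s1 > 0, θ ∈ (0,1), m_θ(x) = (1−θ)·p_{l0,s0}(x) + θ·p_{l1,s1}(x), Δ = (l1−l0)², and S = s0·s1·((s1−s0)² + Δ)·θ·(1−θ) + s0²·s1². Then the differential entropy of the mixture admits the closed form: −∫_ℝ m_θ(x)·log m_θ(x) dx = θ·log( ((s1+s0)² + Δ) / ( 2·√S + (s1² + s0² + Δ)·θ + 2·s0·s1·(1−θ) ) ) + (1−θ)·log( ((s1+s0)² + Δ) / ( 2·√S + 2·s0·s1·θ + (s1² + s0² + Δ)·(1−θ) ) ) + θ·log(s1/s0) + log(4·π·s0). -/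
open MeasureTheory Real

open Filter Topology

namespace CauchyAux


lemma denom_pos {s : ℝ} (hs : 0 < s) (l x : ℝ) : 0 < s ^ 2 + (x - l) ^ 2 := by positivity

lemma inv_denom_le {s : ℝ} (hs : 0 < s) (l x : ℝ) :
    (s ^ 2 + (x - l) ^ 2)⁻¹ ≤ ((1 + 2*l^2 + 2*s^2)/s^2) * (1 + x ^ 2)⁻¹ := by
  rw [← one_div, ← div_eq_mul_inv, div_le_div_iff₀ (by positivity) (by positivity)]
  rw [div_mul_eq_mul_div, le_div_iff₀ (by positivity)]
  nlinarith [sq_nonneg (s*(x - 2*l)), sq_nonneg (s*(x-l)), sq_nonneg (s*x), sq_nonneg (s*l),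
    sq_nonneg (s*s), mul_pos hs hs]

lemma integrable_inv_denom {s : ℝ} (hs : 0 < s) (l : ℝ) :
    Integrable (fun x : ℝ => (s ^ 2 + (x - l) ^ 2)⁻¹) := by
  apply Integrable.mono' (integrable_inv_one_add_sq.const_mul ((1 + 2*l^2 + 2*s^2)/s^2))
  · exact (Continuous.inv₀ (by continuity) fun x => (denom_pos hs l x).ne').aestronglyMeasurable
  · filter_upwards with x
    rw [norm_of_nonneg (by positivity)]
    exact inv_denom_le hs l x

lemma integrable_rpow_aux : Integrable (fun x : ℝ => (1+|x|) ^ (-(3/2) : ℝ)) := by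
  simpa [Real.norm_eq_abs] using
    (integrable_one_add_norm (E := ℝ) (μ := volume) (r := 3/2) (by norm_num))

lemma integrable_sqrt_inv_denom {s : ℝ} (hs : 0 < s) (l : ℝ) :
    Integrable (fun x : ℝ => (1+|x|) ^ ((1:ℝ)/2) * (s ^ 2 + (x - l) ^ 2)⁻¹) := by
  set K := (1 + 2*l^2 + 2*s^2)/s^2 with hK
  have hKpos : 0 < K := by positivity
  apply Integrable.mono' (integrable_rpow_aux.const_mul (2*K))
  · apply Continuous.aestronglyMeasurable
    exact ((continuous_const.add continuous_abs).rpow_const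
      (fun x => Or.inr (by norm_num))).mul
      (Continuous.inv₀ (by continuity) fun x => (denom_pos hs l x).ne')
  · filter_upwards with x
    rw [norm_of_nonneg (by positivity)]
    have h1 : (1 + |x|) ^ ((1:ℝ)/2) * (s ^ 2 + (x - l) ^ 2)⁻¹
        ≤ (1+|x|) ^ ((1:ℝ)/2) * (K * (1 + x ^ 2)⁻¹) := by
      apply mul_le_mul_of_nonneg_left (inv_denom_le hs l x) (by positivity)
    have h2 : (1 + x^2)⁻¹ ≤ 2 * ((1+|x|)^2)⁻¹ := by
      rw [← one_div, ← div_eq_mul_inv, div_le_div_iff₀ (by positivity) (by positivity)]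
      nlinarith [sq_abs x, sq_nonneg (|x| - 1)]
    have h3 : (1+|x|) ^ ((1:ℝ)/2) * ((1+|x|)^2)⁻¹ = (1+|x|) ^ (-(3/2) : ℝ) := by
      rw [← Real.rpow_natCast (1+|x|) 2, ← Real.rpow_neg_one ((1+|x|) ^ ((2:ℕ):ℝ)),
        ← Real.rpow_mul (by positivity), ← Real.rpow_add (by positivity)]
      norm_num
    calc (1 + |x|) ^ ((1:ℝ)/2) * (s ^ 2 + (x - l) ^ 2)⁻¹
        ≤ (1+|x|) ^ ((1:ℝ)/2) * (K * (1 + x ^ 2)⁻¹) := h1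
      _ ≤ (1+|x|) ^ ((1:ℝ)/2) * (K * (2 * ((1+|x|)^2)⁻¹)) := by
          apply mul_le_mul_of_nonneg_left _ (by positivity)
          exact mul_le_mul_of_nonneg_left h2 hKpos.le
      _ = 2*K * ((1+|x|) ^ ((1:ℝ)/2) * ((1+|x|)^2)⁻¹) := by ring
      _ = 2*K * (1+|x|) ^ (-(3/2) : ℝ) := by rw [h3]

lemma log_one_add_sq_le (w : ℝ) : Real.log (1 + w^2) ≤ 4 * (1+|w|) ^ ((1:ℝ)/2) := by
  have h1 : (0:ℝ) < 1 + w^2 := by positivity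
  have h2 : Real.log (1+w^2) = 4 * Real.log ((1+w^2) ^ ((1:ℝ)/4)) := by
    rw [Real.log_rpow h1]; ring
  have h3 : Real.log ((1+w^2) ^ ((1:ℝ)/4)) ≤ (1+w^2)^((1:ℝ)/4) - 1 :=
    Real.log_le_sub_one_of_pos (by positivity)
  have h4 : (1+w^2) ^ ((1:ℝ)/4) ≤ (1+|w|) ^ ((1:ℝ)/2) := by
    have h5 : (1:ℝ)+w^2 ≤ (1+|w|)^2 := by nlinarith [abs_nonneg w, sq_abs w]
    calc (1+w^2)^((1:ℝ)/4) ≤ ((1+|w|)^2)^((1:ℝ)/4) :=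
          Real.rpow_le_rpow (by positivity) h5 (by norm_num)
      _ = (1+|w|)^((1:ℝ)/2) := by
          rw [← Real.rpow_natCast (1+|w|) 2, ← Real.rpow_mul (by positivity)]
          norm_num
  rw [h2]; linarith





lemma cauchyPdf_pos {s : ℝ} (hs : 0 < s) (l x : ℝ) : 0 < cauchyPdf l s x := by
  unfold cauchyPdf
  have := denom_pos hs l x
  positivity

lemma cauchyPdf_eq (l s : ℝ) :
    cauchyPdf l s = fun x => (s/π) * (s ^ 2 + (x - l) ^ 2)⁻¹ := by
  funext x; unfold cauchyPdf; rw [div_eq_mul_inv, mul_inv, div_eq_mul_inv]; ring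

lemma continuous_cauchyPdf {s : ℝ} (hs : 0 < s) (l : ℝ) : Continuous (cauchyPdf l s) := by
  rw [cauchyPdf_eq]
  exact continuous_const.mul (Continuous.inv₀ (by continuity) fun x => (denom_pos hs l x).ne')

lemma integrable_cauchyPdf {s : ℝ} (hs : 0 < s) (l : ℝ) : Integrable (cauchyPdf l s) := by
  rw [cauchyPdf_eq]
  exact (integrable_inv_denom hs l).const_mul _

lemma tendsto_arctan_comp_atTop {s : ℝ} (hs : 0 < s) (l : ℝ) :
    Tendsto (fun x => arctan ((x - l)/s)) atTop (𝓝 (π/2)) := by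
  apply (tendsto_nhds_of_tendsto_nhdsWithin tendsto_arctan_atTop).comp
  apply Tendsto.atTop_div_const hs
  simpa [sub_eq_add_neg] using tendsto_atTop_add_const_right atTop (-l) (tendsto_id (α := ℝ))

lemma tendsto_arctan_comp_atBot {s : ℝ} (hs : 0 < s) (l : ℝ) :
    Tendsto (fun x => arctan ((x - l)/s)) atBot (𝓝 (-(π/2))) := by
  apply (tendsto_nhds_of_tendsto_nhdsWithin tendsto_arctan_atBot).comp
  apply Tendsto.atBot_div_const hs
  simpa [sub_eq_add_neg] using tendsto_atBot_add_const_right atBot (-l) (tendsto_id (α := ℝ))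

lemma integral_cauchyPdf {s : ℝ} (hs : 0 < s) (l : ℝ) :
    ∫ x : ℝ, cauchyPdf l s x = 1 := by
  have hderiv : ∀ x : ℝ, HasDerivAt (fun x => (1/π) * arctan ((x - l)/s))
      (cauchyPdf l s x) x := by
    intro x
    have hinner : HasDerivAt (fun x : ℝ => (x - l)/s) (1/s) x := by
      simpa using ((hasDerivAt_id x).sub_const l).div_const s
    have h := ((Real.hasDerivAt_arctan ((x - l)/s)).comp x hinner).const_mul (1/π)
    refine h.congr_deriv ?_
    unfold cauchyPdf
    have h1 := denom_pos hs l x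
    field_simp
  have := integral_of_hasDerivAt_of_tendsto hderiv (integrable_cauchyPdf hs l)
    (((tendsto_arctan_comp_atBot hs l).const_mul (1/π)))
    (((tendsto_arctan_comp_atTop hs l).const_mul (1/π)))
  rw [this]
  field_simp
  norm_num

lemma tendsto_ratio_atTop (c1 c2 c3 c4 : ℝ) (hc3 : 0 ≤ c3) :
    Tendsto (fun x => (c1+(x-c2)^2)/(c3+(x-c4)^2)) atTop (𝓝 1) := by
  have A : Tendsto (fun x:ℝ => c1/x^2) atTop (𝓝 0) :=
    tendsto_const_nhds.div_atTop (tendsto_pow_atTop two_ne_zero)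
  have A3 : Tendsto (fun x:ℝ => c3/x^2) atTop (𝓝 0) :=
    tendsto_const_nhds.div_atTop (tendsto_pow_atTop two_ne_zero)
  have B : Tendsto (fun x:ℝ => c2/x) atTop (𝓝 0) :=
    tendsto_const_nhds.div_atTop tendsto_id
  have B4 : Tendsto (fun x:ℝ => c4/x) atTop (𝓝 0) :=
    tendsto_const_nhds.div_atTop tendsto_id
  have hone : Tendsto (fun _:ℝ => (1:ℝ)) atTop (𝓝 1) := tendsto_const_nhds
  have num : Tendsto (fun x:ℝ => c1/x^2+(1-c2/x)^2) atTop (𝓝 1) := by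
    have := A.add ((hone.sub B).pow 2)
    simpa using this
  have den : Tendsto (fun x:ℝ => c3/x^2+(1-c4/x)^2) atTop (𝓝 1) := by
    have := A3.add ((hone.sub B4).pow 2)
    simpa using this
  have h1 : Tendsto (fun x:ℝ => (c1/x^2+(1-c2/x)^2)/(c3/x^2+(1-c4/x)^2)) atTop (𝓝 1) := by
    simpa [Pi.div_def] using num.div den one_ne_zero
  apply h1.congr'
  filter_upwards [eventually_gt_atTop (max 0 c4)] with x hx
  have hx0 : (0:ℝ) < x := lt_of_le_of_lt (le_max_left _ _) hx
  have hx4 : c4 < x := lt_of_le_of_lt (le_max_right _ _) hx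
  have hden : 0 < c3 + (x-c4)^2 := by
    have : 0 < (x - c4)^2 := pow_pos (sub_pos.mpr hx4) 2
    linarith
  have hden2 : 0 < c1*0 + (c3/x^2+(1-c4/x)^2) := by
    have he : c3/x^2+(1-c4/x)^2 = (c3+(x-c4)^2)/x^2 := by field_simp
    simpa [he] using div_pos hden (by positivity : (0:ℝ) < x^2)
  rw [div_eq_div_iff (by simpa using hden2.ne') hden.ne']
  field_simp
  try ring

lemma tendsto_ratio_atBot (c1 c2 c3 c4 : ℝ) (hc3 : 0 ≤ c3) :
    Tendsto (fun x => (c1+(x-c2)^2)/(c3+(x-c4)^2)) atBot (𝓝 1) := by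
  have h := (tendsto_ratio_atTop c1 (-c2) c3 (-c4) hc3).comp tendsto_neg_atBot_atTop
  apply h.congr
  intro x
  show (c1 + (-x - -c2)^2)/(c3 + (-x - -c4)^2) = _
  congr 1 <;> ring

lemma tendsto_logdiff (s b l a : ℝ) (hs : 0 < s) (hb : 0 < b) :
    Tendsto (fun x => Real.log (s^2+(x-l)^2) - Real.log (b^2+(x-a)^2)) atTop (𝓝 0)
    ∧ Tendsto (fun x => Real.log (s^2+(x-l)^2) - Real.log (b^2+(x-a)^2)) atBot (𝓝 0) := by
  constructor
  · have h := (Real.continuousAt_log one_ne_zero).tendsto.comp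
      (tendsto_ratio_atTop (s^2) l (b^2) a (by positivity))
    rw [Real.log_one] at h
    apply h.congr
    intro x
    show Real.log ((s^2+(x-l)^2) / (b^2+(x-a)^2)) = _
    exact Real.log_div (denom_pos hs l x).ne' (denom_pos hb a x).ne'
  · have h := (Real.continuousAt_log one_ne_zero).tendsto.comp
      (tendsto_ratio_atBot (s^2) l (b^2) a (by positivity))
    rw [Real.log_one] at h
    apply h.congr
    intro x
    show Real.log ((s^2+(x-l)^2) / (b^2+(x-a)^2)) = _
    exact Real.log_div (denom_pos hs l x).ne' (denom_pos hb a x).ne' 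

lemma integrable_cauchyPdf_mul_log {s b : ℝ} (hs : 0 < s) (hb : 0 < b) (l a : ℝ) :
    Integrable (fun x => cauchyPdf l s x * Real.log ((x-a)^2 + b^2)) := by
  set C := 2*|Real.log b| + 4 * ((1+1/b) * (1+|a|)) ^ ((1:ℝ)/2) with hC
  have hCpos : 0 < C := by positivity
  have hbound : ∀ x : ℝ, |Real.log ((x-a)^2 + b^2)| ≤ C * (1+|x|) ^ ((1:ℝ)/2) := by
    intro x
    have hx1 : (1:ℝ) ≤ (1+|x|) ^ ((1:ℝ)/2) := by
      have h := Real.rpow_le_rpow zero_le_one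
        (by linarith [abs_nonneg x] : (1:ℝ) ≤ 1 + |x|) (by norm_num : (0:ℝ) ≤ 1/2)
      simpa using h
    have hsplit : Real.log ((x-a)^2 + b^2) = 2 * Real.log b + Real.log (1 + ((x-a)/b)^2) := by
      have : (x-a)^2 + b^2 = b^2 * (1 + ((x-a)/b)^2) := by field_simp; ring
      rw [this, Real.log_mul (by positivity : (0:ℝ) < b^2).ne' (by positivity : (0:ℝ) < 1 + ((x-a)/b)^2).ne', Real.log_pow]
      push_cast; ring
    have h1 : Real.log (1 + ((x-a)/b)^2) ≤ 4 * (1+|(x-a)/b|) ^ ((1:ℝ)/2) :=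
      log_one_add_sq_le _
    have h2 : (1+|(x-a)/b|) ≤ (1+1/b) * (1+|a|) * (1+|x|) := by
      have habs : |x - a| ≤ |x| + |a| := abs_sub x a
      rw [abs_div, abs_of_pos hb, ← sub_nonneg]
      have expand : (1+1/b) * (1+|a|) * (1+|x|) - (1 + |x-a|/b)
          = ((b+1)*(1+|a|)*(1+|x|) - b - |x-a|)/b := by field_simp; ring
      rw [expand]
      apply div_nonneg _ hb.le
      nlinarith [abs_nonneg x, abs_nonneg a, abs_nonneg (x-a), hb, mul_nonneg (abs_nonneg a) (abs_nonneg x), mul_nonneg hb.le (abs_nonneg x), mul_nonneg hb.le (abs_nonneg a), mul_nonneg (mul_nonneg hb.le (abs_nonneg a)) (abs_nonneg x)]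
    have h4 : (1+|(x-a)/b|) ^ ((1:ℝ)/2) ≤ ((1+1/b) * (1+|a|)) ^ ((1:ℝ)/2) * (1+|x|) ^ ((1:ℝ)/2) := by
      rw [← Real.mul_rpow (by positivity) (by positivity)]
      exact Real.rpow_le_rpow (by positivity) h2 (by norm_num)
    have hlog1 : (0:ℝ) ≤ Real.log (1 + ((x-a)/b)^2) :=
      Real.log_nonneg (by nlinarith [sq_nonneg ((x-a)/b)])
    calc |Real.log ((x-a)^2 + b^2)| ≤ 2*|Real.log b| + Real.log (1 + ((x-a)/b)^2) := by
          rw [hsplit]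
          calc |2 * Real.log b + Real.log (1 + ((x-a)/b)^2)|
              ≤ |2 * Real.log b| + |Real.log (1 + ((x-a)/b)^2)| := abs_add_le _ _
            _ = 2*|Real.log b| + Real.log (1 + ((x-a)/b)^2) := by
                rw [abs_mul, abs_of_nonneg hlog1]; norm_num
      _ ≤ 2*|Real.log b| * ((1+|x|) ^ ((1:ℝ)/2)) + 4 * (((1+1/b) * (1+|a|)) ^ ((1:ℝ)/2) * (1+|x|) ^ ((1:ℝ)/2)) := by
          have h5 : Real.log (1 + ((x-a)/b)^2)
              ≤ 4 * (((1+1/b) * (1+|a|)) ^ ((1:ℝ)/2) * (1+|x|) ^ ((1:ℝ)/2)) :=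
            le_trans h1 (by nlinarith [h4])
          have h6 : 2*|Real.log b| ≤ 2*|Real.log b| * ((1+|x|) ^ ((1:ℝ)/2)) := by
            nlinarith [abs_nonneg (Real.log b), hx1]
          linarith
      _ = C * (1+|x|) ^ ((1:ℝ)/2) := by rw [hC]; ring
  apply Integrable.mono' (((integrable_sqrt_inv_denom hs l).const_mul ((s/π) * C)))
  · apply Continuous.aestronglyMeasurable
    exact (continuous_cauchyPdf hs l).mul
      (Continuous.log (by continuity) (fun x => by positivity))
  · filter_upwards with x
    have hp := (cauchyPdf_pos hs l x).le
    rw [norm_mul, norm_of_nonneg hp, Real.norm_eq_abs]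
    calc cauchyPdf l s x * |Real.log ((x-a)^2 + b^2)|
        ≤ cauchyPdf l s x * (C * (1+|x|) ^ ((1:ℝ)/2)) :=
          mul_le_mul_of_nonneg_left (hbound x) hp
      _ = (s/π) * C * ((1+|x|) ^ ((1:ℝ)/2) * (s^2+(x-l)^2)⁻¹) := by
          rw [cauchyPdf_eq]; ring





lemma hasDerivAt_log_denom {s : ℝ} (hs : 0 < s) (l x : ℝ) :
    HasDerivAt (fun x => Real.log (s^2+(x-l)^2)) (2*(x-l)/(s^2+(x-l)^2)) x := by
  have hinner : HasDerivAt (fun x : ℝ => s^2+(x-l)^2) (2*(x-l)) x := by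
    have h := (((hasDerivAt_id x).sub_const l).pow 2).const_add (s^2)
    simpa using h
  simpa using hinner.log (denom_pos hs l x).ne'

lemma hasDerivAt_arctan_comp {s : ℝ} (hs : 0 < s) (l x : ℝ) :
    HasDerivAt (fun x => arctan ((x - l)/s)) (1/(1+((x-l)/s)^2) * (1/s)) x := by
  have hinner : HasDerivAt (fun x : ℝ => (x - l)/s) (1/s) x := by
    simpa using ((hasDerivAt_id x).sub_const l).div_const s
  exact (Real.hasDerivAt_arctan ((x - l)/s)).comp x hinner

lemma tendsto_linfrac_atTop {s : ℝ} (hs : 0 < s) (l : ℝ) :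
    Tendsto (fun x => s*(x-l)/(s^2+(x-l)^2)) atTop (𝓝 0) := by
  have hshift : Tendsto (fun x : ℝ => x - l) atTop atTop := by
    simpa [sub_eq_add_neg] using tendsto_atTop_add_const_right atTop (-l) (tendsto_id (α := ℝ))
  have A : Tendsto (fun u:ℝ => s^2/u + u) atTop atTop :=
    (tendsto_const_nhds.div_atTop tendsto_id).add_atTop tendsto_id
  have B : Tendsto (fun u:ℝ => s/(s^2/u+u)) atTop (𝓝 0) :=
    tendsto_const_nhds.div_atTop A
  have C : Tendsto (fun u:ℝ => s*u/(s^2+u^2)) atTop (𝓝 0) := by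
    apply B.congr'
    filter_upwards [eventually_gt_atTop (0:ℝ)] with u hu
    rw [div_eq_div_iff (by positivity : (0:ℝ) < s^2/u+u).ne' (by positivity : (0:ℝ) < s^2+u^2).ne']
    field_simp
  exact (C.comp hshift).congr (fun x => rfl)

lemma tendsto_linfrac_atBot {s : ℝ} (hs : 0 < s) (l : ℝ) :
    Tendsto (fun x => s*(x-l)/(s^2+(x-l)^2)) atBot (𝓝 0) := by
  have h := (tendsto_linfrac_atTop hs (-l)).comp tendsto_neg_atBot_atTop
  have h2 : ∀ x : ℝ, -(s*((-x)-(-l))/(s^2+((-x)-(-l))^2)) = s*(x-l)/(s^2+(x-l)^2) := by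
    intro x
    rw [show (-x)-(-l) = -(x-l) by ring, neg_sq]
    ring
  have h3 := h.neg
  rw [neg_zero] at h3
  exact h3.congr h2

lemma integrable_prod_denom {s b : ℝ} (hs : 0 < s) (hb : 0 < b) (l a : ℝ) :
    Integrable (fun x : ℝ => s*b/((s^2+(x-l)^2)*(b^2+(x-a)^2))) := by
  apply Integrable.mono' ((integrable_inv_denom hs l).const_mul (s/b))
  · apply Continuous.aestronglyMeasurable
    apply Continuous.div continuous_const (by continuity)
    intro x
    have h1 := denom_pos hs l x
    have h2 := denom_pos hb a x
    positivity
  · filter_upwards with x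
    have h1 := denom_pos hs l x
    have h2 := denom_pos hb a x
    rw [norm_of_nonneg (by positivity)]
    have hle : s*b/((s^2+(x-l)^2)*(b^2+(x-a)^2)) ≤ s*b/((s^2+(x-l)^2)*b^2) := by
      apply div_le_div_of_nonneg_left (by positivity) (by positivity)
      have : b^2 ≤ b^2+(x-a)^2 := by nlinarith [sq_nonneg (x-a)]
      nlinarith [h1]
    calc s*b/((s^2+(x-l)^2)*(b^2+(x-a)^2)) ≤ s*b/((s^2+(x-l)^2)*b^2) := hle
      _ = s/b * (s^2+(x-l)^2)⁻¹ := by field_simp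

set_option maxHeartbeats 1000000 in
lemma cauchy_conv {s b : ℝ} (hs : 0 < s) (hb : 0 < b) (l a : ℝ) :
    (∫ x : ℝ, s*b / ((s^2+(x-l)^2) * (b^2+(x-a)^2)))
      = π*(s+b)/((s+b)^2+(a-l)^2) := by
  by_cases hdeg : a = l ∧ s = b
  · obtain ⟨rfl, rfl⟩ := hdeg
    set F : ℝ → ℝ := fun x => (1/(2*s)) * (s*(x-a)/(s^2+(x-a)^2) + arctan ((x-a)/s)) with hF
    have hderiv : ∀ x : ℝ, HasDerivAt F (s*s/((s^2+(x-a)^2)*(s^2+(x-a)^2))) x := by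
      intro x
      have hd := denom_pos hs a x
      have hnum : HasDerivAt (fun x : ℝ => s*(x-a)) s x := by
        simpa using ((hasDerivAt_id x).sub_const a).const_mul s
      have hden : HasDerivAt (fun x : ℝ => s^2+(x-a)^2) (2*(x-a)) x := by
        simpa using (((hasDerivAt_id x).sub_const a).pow 2).const_add (s^2)
      have h1 := hnum.div hden hd.ne'
      have h2 := hasDerivAt_arctan_comp hs a x
      have h3 := (h1.add h2).const_mul (1/(2*s))
      refine h3.congr_deriv ?_
      field_simp
      ring
    have htop : Tendsto F atTop (𝓝 ((1/(2*s)) * (0 + π/2))) :=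
      ((tendsto_linfrac_atTop hs a).add (tendsto_arctan_comp_atTop hs a)).const_mul (1/(2*s))
    have hbot : Tendsto F atBot (𝓝 ((1/(2*s)) * (0 + -(π/2)))) :=
      ((tendsto_linfrac_atBot hs a).add (tendsto_arctan_comp_atBot hs a)).const_mul (1/(2*s))
    rw [integral_of_hasDerivAt_of_tendsto hderiv (integrable_prod_denom hs hs a a) hbot htop]
    field_simp
    ring
  · set d := a - l with hd
    set Q := ((s+b)^2+d^2) * ((s-b)^2+d^2) with hQ
    have hQ2 : 0 < (s-b)^2+d^2 := by
      rcases not_and_or.mp hdeg with h | h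
      · have h1 : d ≠ 0 := sub_ne_zero.mpr h
        have h2 : 0 < d^2 := (sq_nonneg d).lt_of_ne (Ne.symm (pow_ne_zero 2 h1))
        nlinarith [sq_nonneg (s-b)]
      · have h1 : s - b ≠ 0 := sub_ne_zero.mpr h
        have h2 : 0 < (s-b)^2 := (sq_nonneg _).lt_of_ne (Ne.symm (pow_ne_zero 2 h1))
        nlinarith [sq_nonneg d]
    have hQpos : 0 < Q := by
      have h1 : 0 < (s+b)^2+d^2 := by positivity
      exact mul_pos h1 hQ2
    set c2 := (b^2+d^2-s^2)/s with hc2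
    set c4 := (s^2+d^2-b^2)/b with hc4
    set F : ℝ → ℝ := fun x => s*b/Q *
      (d * (Real.log (s^2+(x-l)^2) - Real.log (b^2+(x-a)^2))
        + c2 * arctan ((x-l)/s) + c4 * arctan ((x-a)/b)) with hF
    have hderiv : ∀ x : ℝ, HasDerivAt F (s*b/((s^2+(x-l)^2)*(b^2+(x-a)^2))) x := by
      intro x
      have hd1 := denom_pos hs l x
      have hd2 := denom_pos hb a x
      have h1 := hasDerivAt_log_denom hs l x
      have h2 := hasDerivAt_arctan_comp hs l x
      have h3 := hasDerivAt_log_denom hb a x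
      have h4 := hasDerivAt_arctan_comp hb a x
      have h5 := ((((h1.sub h3).const_mul d).add (h2.const_mul c2)).add
        (h4.const_mul c4)).const_mul (s*b/Q)
      refine h5.congr_deriv ?_
      rw [hc2, hc4, hQ, hd]
      have hq1 : (s+b)^2+(a-l)^2 ≠ 0 := by positivity
      have hq2 : (s-b)^2+(a-l)^2 ≠ 0 := by rw [hd] at hQ2; exact hQ2.ne'
      field_simp
      ring
    have htop : Tendsto F atTop
        (𝓝 (s*b/Q * (d * 0 + c2 * (π/2) + c4 * (π/2)))) :=
      ((((tendsto_logdiff s b l a hs hb).1.const_mul d).add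
        ((tendsto_arctan_comp_atTop hs l).const_mul c2)).add
        ((tendsto_arctan_comp_atTop hb a).const_mul c4)).const_mul (s*b/Q)
    have hbot : Tendsto F atBot
        (𝓝 (s*b/Q * (d * 0 + c2 * (-(π/2)) + c4 * (-(π/2))))) :=
      ((((tendsto_logdiff s b l a hs hb).2.const_mul d).add
        ((tendsto_arctan_comp_atBot hs l).const_mul c2)).add
        ((tendsto_arctan_comp_atBot hb a).const_mul c4)).const_mul (s*b/Q)
    rw [integral_of_hasDerivAt_of_tendsto hderiv (integrable_prod_denom hs hb l a) hbot htop]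
    rw [hc2, hc4, hQ, hd]
    have h1 : ((s+b)^2+(a-l)^2) ≠ 0 := by positivity
    have h2 : ((s-b)^2+(a-l)^2) ≠ 0 := by rw [hd] at hQ2; exact hQ2.ne'
    field_simp
    ring





lemma key_integral (l a : ℝ) {s b : ℝ} (hs : 0 < s) (hb : 0 < b) :
    (∫ x : ℝ, cauchyPdf l s x * Real.log ((x-a)^2+b^2))
      = Real.log ((l-a)^2+(s+b)^2) := by
  set Φ : ℝ → ℝ := fun t => ∫ x : ℝ, cauchyPdf l s x * Real.log ((x-a)^2+t^2) with hΦdef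
  -- derivative of Φ on Ioi 0
  have hΦderiv : ∀ t : ℝ, 0 < t →
      HasDerivAt Φ (2*(s+t)/((s+t)^2+(a-l)^2)) t := by
    intro t ht
    have hmain := hasDerivAt_integral_of_dominated_loc_of_deriv_le (s := Metric.ball t (t/2))
      (F := fun t x => cauchyPdf l s x * Real.log ((x-a)^2+t^2))
      (F' := fun t x => cauchyPdf l s x * (2*t/((x-a)^2+t^2)))
      (x₀ := t) (bound := fun x => cauchyPdf l s x * (4/t))
      (Metric.ball_mem_nhds t (half_pos ht)) ?_ (integrable_cauchyPdf_mul_log hs ht l a) ?_ ?_ ?_ ?_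
    · have heq : (∫ x : ℝ, cauchyPdf l s x * (2*t/((x-a)^2+t^2)))
          = 2*(s+t)/((s+t)^2+(a-l)^2) := by
        have hpt : ∀ x : ℝ, cauchyPdf l s x * (2*t/((x-a)^2+t^2))
            = (2/π) * (s*t / ((s^2+(x-l)^2) * (t^2+(x-a)^2))) := by
          intro x
          unfold cauchyPdf
          have h1 := denom_pos hs l x
          have h2 := denom_pos ht a x
          rw [div_mul_div_comm, div_mul_div_comm]
          rw [div_eq_div_iff (by positivity) (by positivity)]
          ring
        rw [show (fun x : ℝ => cauchyPdf l s x * (2*t/((x-a)^2+t^2)))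
            = fun x : ℝ => (2/π) * (s*t / ((s^2+(x-l)^2) * (t^2+(x-a)^2))) from funext hpt]
        rw [MeasureTheory.integral_const_mul, cauchy_conv hs ht l a]
        field_simp
      rw [← heq]
      exact hmain.2
    · filter_upwards [eventually_gt_nhds (half_lt_self ht)] with t' ht'
      have ht'0 : 0 < t' := lt_trans (half_pos ht) ht'
      apply Continuous.aestronglyMeasurable
      exact ((continuous_cauchyPdf hs l).mul
        (Continuous.log (by continuity) (fun x => (by positivity : (0:ℝ) < (x-a)^2+t'^2).ne')))
    · apply Continuous.aestronglyMeasurable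
      apply (continuous_cauchyPdf hs l).mul
      apply Continuous.div continuous_const (by continuity)
      exact fun x => (by positivity : (0:ℝ) < (x-a)^2+t^2).ne'
    · filter_upwards with x
      intro t' ht'
      rw [Metric.mem_ball, Real.dist_eq, abs_lt] at ht'
      have h1 : t/2 < t' := by linarith [ht'.1]
      have h2 : 0 < t' := lt_trans (half_pos ht) h1
      rw [norm_mul, norm_of_nonneg (cauchyPdf_pos hs l x).le]
      apply mul_le_mul_of_nonneg_left _ (cauchyPdf_pos hs l x).le
      rw [norm_of_nonneg (by positivity)]
      have h3 : 2*t'/((x-a)^2+t'^2) ≤ 2*t'/(t'^2) := by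
        apply div_le_div_of_nonneg_left (by positivity) (by positivity)
        nlinarith [sq_nonneg (x-a)]
      calc 2*t'/((x-a)^2+t'^2) ≤ 2*t'/(t'^2) := h3
        _ = 2/t' := by field_simp
        _ ≤ 4/t := by
          rw [div_le_div_iff₀ h2 ht]
          nlinarith
    · exact (integrable_cauchyPdf hs l).mul_const _
    · filter_upwards with x
      intro t' ht'
      rw [Metric.mem_ball, Real.dist_eq, abs_lt] at ht'
      have h2 : 0 < t' := by linarith [ht'.1, half_pos ht]
      have hinner : HasDerivAt (fun u : ℝ => (x-a)^2+u^2) (2*t') t' := by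
        simpa using ((hasDerivAt_id t').pow 2).const_add ((x-a)^2)
      have hlog := hinner.log (by positivity : (0:ℝ) < (x-a)^2+t'^2).ne'
      have hfin := hlog.const_mul (cauchyPdf l s x)
      simpa [mul_div_assoc] using hfin
  -- derivative of the comparison function
  have hd2 : ∀ t : ℝ, 0 < t →
      HasDerivAt (fun u : ℝ => Real.log ((s+u)^2+(a-l)^2)) (2*(s+t)/((s+t)^2+(a-l)^2)) t := by
    intro t ht
    have hst : 0 < s + t := by linarith
    have hinner : HasDerivAt (fun u : ℝ => (s+u)^2+(a-l)^2) (2*(s+t)) t := by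
      simpa using (((hasDerivAt_id t).const_add s).pow 2).add_const ((a-l)^2)
    simpa using hinner.log (by positivity : (0:ℝ) < (s+t)^2+(a-l)^2).ne'
  set Ψ : ℝ → ℝ := fun t => Φ t - Real.log ((s+t)^2+(a-l)^2) with hΨdef
  have hΨderiv : ∀ t : ℝ, 0 < t → HasDerivAt Ψ 0 t := by
    intro t ht
    have h := (hΦderiv t ht).sub (hd2 t ht)
    rw [sub_self] at h; exact h
  have hconst : ∀ t' : ℝ, b ≤ t' → Ψ t' = Ψ b := by
    intro t' hle
    rcases eq_or_lt_of_le hle with rfl | hlt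
    · rfl
    · obtain ⟨c, hc, hceq⟩ := exists_hasDerivAt_eq_slope Ψ (fun _ => (0:ℝ)) hlt
        (fun y hy => ((hΨderiv y (lt_of_lt_of_le hb hy.1)).continuousAt).continuousWithinAt)
        (fun y hy => hΨderiv y (lt_trans hb hy.1))
      have h0 : (Ψ t' - Ψ b)/(t'-b) = 0 := hceq.symm
      rcases div_eq_zero_iff.mp h0 with h | h
      · linarith [sub_eq_zero.mp h]
      · exact absurd h (sub_ne_zero.mpr (ne_of_gt hlt))
  have hlim1 : Tendsto (fun t => Φ t - 2*Real.log t) atTop (𝓝 0) := by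
    have hDCT : Tendsto (fun t => ∫ x : ℝ, cauchyPdf l s x * Real.log (1+((x-a)/t)^2))
        atTop (𝓝 0) := by
      have h := tendsto_integral_filter_of_dominated_convergence (μ := volume) (l := atTop)
        (F := fun (t : ℝ) (x : ℝ) => cauchyPdf l s x * Real.log (1+((x-a)/t)^2))
        (f := fun _ => (0:ℝ)) (bound := fun x => cauchyPdf l s x * Real.log ((x-a)^2+1))
        ?_ ?_ ?_ ?_
      · simpa using h
      · filter_upwards [eventually_ge_atTop (1:ℝ)] with t ht
        apply Continuous.aestronglyMeasurable
        exact (continuous_cauchyPdf hs l).mul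
          (Continuous.log (by continuity) (fun x => by positivity))
      · filter_upwards [eventually_ge_atTop (1:ℝ)] with t ht
        filter_upwards with x
        have hp := (cauchyPdf_pos hs l x).le
        have ht2 : (1:ℝ) ≤ t^2 := by nlinarith
        have hsq : ((x-a)/t)^2 ≤ (x-a)^2 := by
          rw [div_pow]
          exact div_le_self (sq_nonneg _) ht2
        have hargle : 1+((x-a)/t)^2 ≤ (x-a)^2+1 := by linarith
        rw [norm_mul, norm_of_nonneg hp, norm_of_nonneg (Real.log_nonneg (by linarith [sq_nonneg ((x-a)/t)]))]
        exact mul_le_mul_of_nonneg_left (Real.log_le_log (by positivity) hargle) hp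
      · have h := integrable_cauchyPdf_mul_log hs one_pos l a
        simpa using h
      · filter_upwards with x
        have hin : Tendsto (fun t : ℝ => 1 + ((x-a)/t)^2) atTop (𝓝 (1+0^2)) :=
          ((tendsto_const_nhds.div_atTop tendsto_id).pow 2).const_add 1
        have hlog := (Real.continuousAt_log (by norm_num : (1:ℝ)+0^2 ≠ 0)).tendsto.comp hin
        have := hlog.const_mul (cauchyPdf l s x)
        simpa using this
    apply hDCT.congr'
    filter_upwards [eventually_gt_atTop (0:ℝ)] with t ht
    have hsub : Φ t - 2*Real.log t = ∫ x : ℝ,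
        (cauchyPdf l s x * Real.log ((x-a)^2+t^2) - cauchyPdf l s x * (2*Real.log t)) := by
      rw [integral_sub (integrable_cauchyPdf_mul_log hs ht l a)
        ((integrable_cauchyPdf hs l).mul_const _), integral_mul_const,
        integral_cauchyPdf hs l, one_mul]
    rw [hsub]
    apply integral_congr_ae
    filter_upwards with x
    rw [← mul_sub]
    congr 1
    have harg : (x-a)^2+t^2 = t^2*(1+((x-a)/t)^2) := by field_simp; ring
    rw [harg, Real.log_mul (by positivity : (0:ℝ) < t^2).ne'
      (by positivity : (0:ℝ) < 1+((x-a)/t)^2).ne', Real.log_pow]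
    push_cast
    ring
  have hlim2 : Tendsto (fun t => Real.log ((s+t)^2+(a-l)^2) - 2*Real.log t) atTop (𝓝 0) := by
    have h := (Real.continuousAt_log one_ne_zero).tendsto.comp
      (tendsto_ratio_atTop ((a-l)^2) (-s) 0 0 le_rfl)
    rw [Real.log_one] at h
    apply h.congr'
    filter_upwards [eventually_gt_atTop (0:ℝ)] with t ht
    show Real.log (((a-l)^2+(t - -s)^2)/(0+(t-0)^2)) = _
    have hst : 0 < s + t := by linarith
    rw [show (a-l)^2+(t - -s)^2 = (s+t)^2+(a-l)^2 by ring,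
      show (0:ℝ)+(t-0)^2 = t^2 by ring,
      Real.log_div (by positivity : (0:ℝ) < (s+t)^2+(a-l)^2).ne'
        (by positivity : (0:ℝ) < t^2).ne', Real.log_pow]
    push_cast
    ring
  have hΨlim : Tendsto Ψ atTop (𝓝 0) := by
    have h := hlim1.sub hlim2
    rw [sub_zero] at h
    exact h.congr (fun t => by rw [hΨdef]; ring)
  have hΨb : Ψ b = 0 := by
    have hev : Ψ =ᶠ[atTop] (fun _ => Ψ b) := by
      filter_upwards [eventually_ge_atTop b] with t ht
      exact hconst t ht
    have h1 : Tendsto (fun _ : ℝ => Ψ b) atTop (𝓝 0) := hΨlim.congr' hev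
    exact (tendsto_nhds_unique h1 tendsto_const_nhds).symm
  have hΦb : Φ b = ∫ x : ℝ, cauchyPdf l s x * Real.log ((x-a)^2+b^2) := rfl
  have hfin : Φ b = Real.log ((s+b)^2+(a-l)^2) := by
    have h := hΨb
    rw [hΨdef] at h
    simp only at h
    linarith
  rw [← hΦb, hfin]
  congr 1
  ring


end CauchyAux

open CauchyAux

set_option maxHeartbeats 4000000 in
/-- Closed form of the differential entropy of a mixture of two Cauchy densities. -/
theorem entropy_cauchy_mixture (l0 l1 s0 s1 θ Δ S : ℝ) (hs0 : 0 < s0) (hs1 : 0 < s1)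
    (hθ : θ ∈ Set.Ioo (0 : ℝ) 1)
    (hΔ : Δ = (l1 - l0) ^ 2)
    (hS : S = s0 * s1 * ((s1 - s0) ^ 2 + Δ) * θ * (1 - θ) + s0 ^ 2 * s1 ^ 2) :
    -∫ x : ℝ, ((1 - θ) * cauchyPdf l0 s0 x + θ * cauchyPdf l1 s1 x) *
        Real.log ((1 - θ) * cauchyPdf l0 s0 x + θ * cauchyPdf l1 s1 x) =
      θ * Real.log (((s1 + s0) ^ 2 + Δ) /
          (2 * Real.sqrt S + (s1 ^ 2 + s0 ^ 2 + Δ) * θ + 2 * s0 * s1 * (1 - θ))) +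
        (1 - θ) * Real.log (((s1 + s0) ^ 2 + Δ) /
          (2 * Real.sqrt S + 2 * s0 * s1 * θ + (s1 ^ 2 + s0 ^ 2 + Δ) * (1 - θ))) +
        θ * Real.log (s1 / s0) + Real.log (4 * π * s0) := by
  obtain ⟨hθ0, hθ1⟩ := hθ
  have hθ1' : 0 < 1 - θ := by linarith
  have hπ := Real.pi_pos
  subst hS hΔ
  set Δ := (l1 - l0) ^ 2 with hΔ
  set S := s0 * s1 * ((s1 - s0) ^ 2 + Δ) * θ * (1 - θ) + s0 ^ 2 * s1 ^ 2 with hS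
  have hΔnn : 0 ≤ Δ := by rw [hΔ]; positivity
  have hSpos : 0 < S := by
    have h1 : 0 < s0*s1 := mul_pos hs0 hs1
    have h3 : 0 < θ*(1-θ) := mul_pos hθ0 hθ1'
    have h4 : 0 < s0^2*s1^2 := by positivity
    have h2 : 0 ≤ (s1-s0)^2+Δ := by positivity
    nlinarith [mul_nonneg (mul_nonneg h1.le h2) h3.le]
  set t := Real.sqrt S with htdef
  have ht2 : t^2 = S := Real.sq_sqrt hSpos.le
  have htpos : 0 < t := Real.sqrt_pos.mpr hSpos
  set w := (1-θ)*s0 + θ*s1 with hwdef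
  have hw : 0 < w := by nlinarith
  set α := ((1-θ)*s0*l1 + θ*s1*l0)/w with hα
  set β := t/w with hβ
  have hβpos : 0 < β := div_pos htpos hw
  set E1 := 2*t + (s1^2+s0^2+Δ)*θ + 2*s0*s1*(1-θ) with hE1
  set E0 := 2*t + 2*s0*s1*θ + (s1^2+s0^2+Δ)*(1-θ) with hE0
  have hE1pos : 0 < E1 := by
    rw [hE1]; nlinarith [mul_pos hs0 hs1, sq_nonneg s0, sq_nonneg s1]
  have hE0pos : 0 < E0 := by
    rw [hE0]; nlinarith [mul_pos hs0 hs1, sq_nonneg s0, sq_nonneg s1]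
  have hApos : 0 < (s1+s0)^2 + Δ := by positivity
  -- key algebraic identities
  have hNid : ∀ x : ℝ, (1-θ)*s0*(s1^2+(x-l1)^2) + θ*s1*(s0^2+(x-l0)^2) = w*((x-α)^2+β^2) := by
    intro x
    have expand : w*((x-α)^2+β^2)
        = ((w*x - ((1-θ)*s0*l1 + θ*s1*l0))^2 + t^2)/w := by
      rw [hα, hβ]; field_simp
    rw [expand, ht2, eq_div_iff hw.ne', hS, hwdef, hΔ]
    ring
  have hI0 : (l0-α)^2+(s0+β)^2 = s0*E0/w := by
    have expand0 : (l0-α)^2+(s0+β)^2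
        = ((l0*w - ((1-θ)*s0*l1 + θ*s1*l0))^2 + (s0*w + t)^2)/w^2 := by
      rw [hα, hβ]; field_simp
    rw [expand0, div_eq_div_iff (by positivity) hw.ne']
    linear_combination w * ht2
  have hI1 : (l1-α)^2+(s1+β)^2 = s1*E1/w := by
    have expand1 : (l1-α)^2+(s1+β)^2
        = ((l1*w - ((1-θ)*s0*l1 + θ*s1*l0))^2 + (s1*w + t)^2)/w^2 := by
      rw [hα, hβ]; field_simp
    rw [expand1, div_eq_div_iff (by positivity) hw.ne']
    linear_combination w * ht2
  -- per-component integral of log of mixture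
  have hint : ∀ (lj : ℝ) {sj : ℝ}, 0 < sj → (∫ x : ℝ, cauchyPdf lj sj x *
        (Real.log w + Real.log ((x-α)^2+β^2) - Real.log π
          - Real.log ((x-l0)^2+s0^2) - Real.log ((x-l1)^2+s1^2)))
      = Real.log w - Real.log π + Real.log ((lj-α)^2+(sj+β)^2)
        - Real.log ((lj-l0)^2+(sj+s0)^2) - Real.log ((lj-l1)^2+(sj+s1)^2) := by
    intro lj sj hsj
    have i1 : Integrable (fun x => cauchyPdf lj sj x * Real.log ((x-α)^2+β^2)) :=
      integrable_cauchyPdf_mul_log hsj hβpos lj α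
    have i2 : Integrable (fun x => cauchyPdf lj sj x * Real.log ((x-l0)^2+s0^2)) :=
      integrable_cauchyPdf_mul_log hsj hs0 lj l0
    have i3 : Integrable (fun x => cauchyPdf lj sj x * Real.log ((x-l1)^2+s1^2)) :=
      integrable_cauchyPdf_mul_log hsj hs1 lj l1
    have i4 : Integrable (fun x => cauchyPdf lj sj x * (Real.log w - Real.log π)) :=
      (integrable_cauchyPdf hsj lj).mul_const _
    have heq : (fun x : ℝ => cauchyPdf lj sj x *
        (Real.log w + Real.log ((x-α)^2+β^2) - Real.log π
          - Real.log ((x-l0)^2+s0^2) - Real.log ((x-l1)^2+s1^2)))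
        = fun x : ℝ => (cauchyPdf lj sj x * (Real.log w - Real.log π)
            + cauchyPdf lj sj x * Real.log ((x-α)^2+β^2))
          - (cauchyPdf lj sj x * Real.log ((x-l0)^2+s0^2)
            + cauchyPdf lj sj x * Real.log ((x-l1)^2+s1^2)) := by
      funext x; ring
    have i14 : Integrable (fun x : ℝ => cauchyPdf lj sj x * (Real.log w - Real.log π)
        + cauchyPdf lj sj x * Real.log ((x-α)^2+β^2)) := i4.add i1
    have i23 : Integrable (fun x : ℝ => cauchyPdf lj sj x * Real.log ((x-l0)^2+s0^2)
        + cauchyPdf lj sj x * Real.log ((x-l1)^2+s1^2)) := i2.add i3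
    rw [heq, integral_sub i14 i23]
    rw [integral_add i4 i1, integral_add i2 i3,
      integral_mul_const, integral_cauchyPdf hsj lj, one_mul,
      key_integral lj α hsj hβpos, key_integral lj l0 hsj hs0, key_integral lj l1 hsj hs1]
    ring
  -- pointwise form of the mixture
  have hm : ∀ x : ℝ, (1-θ) * cauchyPdf l0 s0 x + θ * cauchyPdf l1 s1 x
      = w*((x-α)^2+β^2) / (π * (((x-l0)^2+s0^2) * ((x-l1)^2+s1^2))) := by
    intro x
    have hd0 := denom_pos hs0 l0 x
    have hd1 := denom_pos hs1 l1 x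
    rw [← hNid x]
    unfold cauchyPdf
    field_simp
    ring
  have hlogm : ∀ x : ℝ, Real.log ((1-θ) * cauchyPdf l0 s0 x + θ * cauchyPdf l1 s1 x)
      = Real.log w + Real.log ((x-α)^2+β^2) - Real.log π
        - Real.log ((x-l0)^2+s0^2) - Real.log ((x-l1)^2+s1^2) := by
    intro x
    have hd0 : (0:ℝ) < (x-l0)^2+s0^2 := by positivity
    have hd1 : (0:ℝ) < (x-l1)^2+s1^2 := by positivity
    have hnum : (0:ℝ) < (x-α)^2+β^2 := by positivity
    rw [hm x, Real.log_div (by positivity) (by positivity),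
      Real.log_mul hw.ne' hnum.ne', Real.log_mul hπ.ne' (by positivity),
      Real.log_mul hd0.ne' hd1.ne']
    ring
  have hintegrand : (fun x : ℝ => ((1-θ) * cauchyPdf l0 s0 x + θ * cauchyPdf l1 s1 x) *
      Real.log ((1-θ) * cauchyPdf l0 s0 x + θ * cauchyPdf l1 s1 x))
      = fun x : ℝ => (1-θ) * (cauchyPdf l0 s0 x *
          (Real.log w + Real.log ((x-α)^2+β^2) - Real.log π
            - Real.log ((x-l0)^2+s0^2) - Real.log ((x-l1)^2+s1^2)))
        + θ * (cauchyPdf l1 s1 x *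
          (Real.log w + Real.log ((x-α)^2+β^2) - Real.log π
            - Real.log ((x-l0)^2+s0^2) - Real.log ((x-l1)^2+s1^2))) := by
    funext x
    rw [hlogm x]
    ring
  have hBint : ∀ (lj : ℝ) {sj : ℝ}, 0 < sj → Integrable (fun x : ℝ => cauchyPdf lj sj x *
      (Real.log w + Real.log ((x-α)^2+β^2) - Real.log π
        - Real.log ((x-l0)^2+s0^2) - Real.log ((x-l1)^2+s1^2))) := by
    intro lj sj hsj
    have heq : (fun x : ℝ => cauchyPdf lj sj x *
        (Real.log w + Real.log ((x-α)^2+β^2) - Real.log π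
          - Real.log ((x-l0)^2+s0^2) - Real.log ((x-l1)^2+s1^2)))
        = fun x : ℝ => (cauchyPdf lj sj x * (Real.log w - Real.log π)
            + cauchyPdf lj sj x * Real.log ((x-α)^2+β^2))
          - (cauchyPdf lj sj x * Real.log ((x-l0)^2+s0^2)
            + cauchyPdf lj sj x * Real.log ((x-l1)^2+s1^2)) := by
      funext x; ring
    rw [heq]
    apply Integrable.sub
    exact (((integrable_cauchyPdf hsj lj).mul_const _).add
        (integrable_cauchyPdf_mul_log hsj hβpos lj α))
    exact (integrable_cauchyPdf_mul_log hsj hs0 lj l0).add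
        (integrable_cauchyPdf_mul_log hsj hs1 lj l1)
  rw [hintegrand, integral_add ((hBint l0 hs0).const_mul _) ((hBint l1 hs1).const_mul _),
    MeasureTheory.integral_const_mul, MeasureTheory.integral_const_mul, hint l0 hs0, hint l1 hs1]
  -- final scalar log computation
  rw [hI0, hI1,
    show (l0-l0)^2+(s0+s0)^2 = 4*s0^2 by ring,
    show (l1-l1)^2+(s1+s1)^2 = 4*s1^2 by ring,
    show (l0-l1)^2+(s0+s1)^2 = (s1+s0)^2+Δ by rw [hΔ]; ring,
    show (l1-l0)^2+(s1+s0)^2 = (s1+s0)^2+Δ by rw [hΔ]; ring]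
  rw [Real.log_div (by positivity : (0:ℝ) < s0*E0).ne' hw.ne',
    Real.log_div (by positivity : (0:ℝ) < s1*E1).ne' hw.ne',
    Real.log_mul hs0.ne' hE0pos.ne', Real.log_mul hs1.ne' hE1pos.ne',
    Real.log_mul (by norm_num : (4:ℝ) ≠ 0) (by positivity : (s0:ℝ)^2 ≠ 0),
    Real.log_mul (by norm_num : (4:ℝ) ≠ 0) (by positivity : (s1:ℝ)^2 ≠ 0),
    Real.log_pow, Real.log_pow,
    Real.log_div hApos.ne' hE1pos.ne', Real.log_div hApos.ne' hE0pos.ne',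
    Real.log_div hs1.ne' hs0.ne',
    Real.log_mul (by positivity : (4:ℝ)*π ≠ 0) hs0.ne',
    Real.log_mul (by norm_num : (4:ℝ) ≠ 0) hπ.ne']
  push_cast
  ring
end

section
/- Let l0,l1 ∈ ℝ, s0,s1 > 0, θ ∈ (0,1), and m_θ(x) = (1−θ)·p_{l0,s0}(x) + θ·p_{l1,s1}(x). Then the cross-entropy between p_{l0,s0} and m_θ admits the closed form: −∫_ℝ p_{l0,s0}(x)·log m_θ(x) dx = log(4·π·s0) + log( ((l0−l1)² + (s0+s1)²) / ( (1−θ)·(s0² + s1² + (l0−l1)²) + 2·θ·s0·s1 + 2·√( s0²·s1² + s0·s1·((s0−s1)² + (l0−l1)²)·θ·(1−θ) ) ) ). -/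
open MeasureTheory Real

open Filter

lemma quad_pos {s : ℝ} (hs : 0 < s) (y : ℝ) : 0 < s ^ 2 + y ^ 2 := by positivity

lemma cauchyPdf_pos {l s : ℝ} (hs : 0 < s) (x : ℝ) : 0 < cauchyPdf l s x := by
  unfold cauchyPdf
  have := pi_pos
  positivity

lemma cont_cauchyPdf {l s : ℝ} (hs : 0 < s) : Continuous (cauchyPdf l s) := by
  unfold cauchyPdf
  apply continuous_const.div (by continuity)
  intro x
  have := pi_pos
  positivity

/-- Integrability of the Cauchy density. -/
lemma integrable_cauchyPdf {l s : ℝ} (hs : 0 < s) : Integrable (cauchyPdf l s) := by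
  have h1 : Integrable (fun x : ℝ => (1 + x ^ 2)⁻¹) := integrable_inv_one_add_sq
  have h2 : Integrable (fun x : ℝ => (1 + ((x - l)/s) ^ 2)⁻¹) := by
    have := (h1.comp_div (ne_of_gt hs)).comp_sub_right l
    simpa using this
  apply (h2.const_mul (1/(π*s))).mono' ((cont_cauchyPdf hs).aestronglyMeasurable)
  filter_upwards with x
  have hπ := pi_pos
  have h3 : 0 < s ^ 2 + (x - l) ^ 2 := by positivity
  rw [Real.norm_eq_abs, abs_of_pos (cauchyPdf_pos hs x)]
  unfold cauchyPdf
  have : (1 + ((x - l)/s) ^ 2)⁻¹ = s^2 / (s^2 + (x-l)^2) := by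
    field_simp
  rw [this]
  apply le_of_eq
  field_simp

lemma hasDerivAt_arctan_affine {l s : ℝ} (hs : 0 < s) (x : ℝ) :
    HasDerivAt (fun x : ℝ => (1/π) * arctan ((x - l)/s)) (cauchyPdf l s x) x := by
  have h1 : HasDerivAt (fun x : ℝ => (x - l)/s) (1/s) x := by
    simpa using ((hasDerivAt_id x).sub_const l).div_const s
  have h2 := (Real.hasDerivAt_arctan ((x - l)/s)).comp x h1
  have h3 := h2.const_mul (1/π)
  refine h3.congr_deriv (Eq.symm ?_)
  unfold cauchyPdf
  have hπ := pi_pos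
  have : 0 < s^2 + (x-l)^2 := by positivity
  field_simp

lemma tendsto_arctan_affine_top {l s : ℝ} (hs : 0 < s) :
    Tendsto (fun x : ℝ => (1/π) * arctan ((x - l)/s)) atTop (nhds ((1/π) * (π/2))) := by
  apply Tendsto.const_mul
  apply (tendsto_nhds_of_tendsto_nhdsWithin Real.tendsto_arctan_atTop).comp
  apply Tendsto.atTop_div_const hs
  exact tendsto_atTop_add_const_right _ _ tendsto_id

lemma tendsto_arctan_affine_bot {l s : ℝ} (hs : 0 < s) :
    Tendsto (fun x : ℝ => (1/π) * arctan ((x - l)/s)) atBot (nhds ((1/π) * (-(π/2)))) := by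
  apply Tendsto.const_mul
  apply (tendsto_nhds_of_tendsto_nhdsWithin Real.tendsto_arctan_atBot).comp
  apply Tendsto.atBot_div_const hs
  exact tendsto_atBot_add_const_right _ _ tendsto_id

lemma integral_cauchyPdf {l s : ℝ} (hs : 0 < s) : ∫ x : ℝ, cauchyPdf l s x = 1 := by
  have := integral_of_hasDerivAt_of_tendsto (f := fun x : ℝ => (1/π) * arctan ((x - l)/s))
    (fun x => hasDerivAt_arctan_affine hs x) (integrable_cauchyPdf hs)
    (tendsto_arctan_affine_bot hs) (tendsto_arctan_affine_top hs)
  rw [this]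
  have hπ := pi_ne_zero
  field_simp; norm_num

lemma log_le_four_rpow {t : ℝ} (ht : 1 ≤ t) : Real.log t ≤ 4 * t ^ ((4:ℝ)⁻¹) := by
  have h1 : 0 < t := lt_of_lt_of_le one_pos ht
  have h2 : Real.log t = 4 * Real.log (t ^ ((4:ℝ)⁻¹)) := by
    rw [Real.log_rpow h1]; ring
  rw [h2]
  have h3 : 0 < t ^ ((4:ℝ)⁻¹) := Real.rpow_pos_of_pos h1 _
  nlinarith [Real.log_le_sub_one_of_pos h3]

lemma integrable_cauchy_log_center {l s : ℝ} (hs : 0 < s) :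
    Integrable fun x : ℝ => cauchyPdf l s x * Real.log (1 + (x - l) ^ 2) := by
  have base : Integrable fun x : ℝ => ((1:ℝ) + ‖x‖ ^ 2) ^ (-(3/2 : ℝ)/2) :=
    integrable_rpow_neg_one_add_norm_sq (E := ℝ) (by norm_num)
  have base' : Integrable fun x : ℝ => ((1:ℝ) + (x - l) ^ 2) ^ (-(3/4 : ℝ)) := by
    have := (base.comp_sub_right l)
    apply this.congr
    filter_upwards with x
    norm_num [Real.norm_eq_abs, sq_abs]
  set m := min (s^2) 1 with hm
  have hm0 : 0 < m := lt_min (by positivity) one_pos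
  apply ((base'.const_mul (4*s/(π*m))).mono'
    (((cont_cauchyPdf hs).mul (Continuous.log (by continuity) (fun x => by positivity) : Continuous fun x : ℝ => Real.log (1+(x-l)^2))).aestronglyMeasurable))
  filter_upwards with x
  have hπ := pi_pos
  have h1 : (0:ℝ) < 1 + (x-l)^2 := by positivity
  have hlog : 0 ≤ Real.log (1 + (x-l)^2) := Real.log_nonneg (by nlinarith)
  simp only [Pi.mul_apply]
  rw [Real.norm_eq_abs, abs_of_nonneg (mul_nonneg (le_of_lt (cauchyPdf_pos hs x)) hlog)]
  have key1 : Real.log (1 + (x-l)^2) ≤ 4 * (1 + (x-l)^2) ^ ((4:ℝ)⁻¹) :=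
    log_le_four_rpow (by nlinarith)
  have key2 : cauchyPdf l s x ≤ s/(π*m) * ((1 + (x-l)^2))⁻¹ := by
    unfold cauchyPdf
    have e1 : s/(π*m) * ((1 + (x-l)^2))⁻¹ = s / (π*m*(1+(x-l)^2)) := by
      have hπ' : π ≠ 0 := pi_ne_zero
      have hm' : m ≠ 0 := ne_of_gt hm0
      have h1' : (1 + (x-l)^2) ≠ 0 := ne_of_gt h1
      field_simp
    rw [e1, div_le_div_iff₀ (by positivity) (by positivity)]
    have h2 : m ≤ s ^ 2 := min_le_left _ _
    have h3 : m ≤ 1 := min_le_right _ _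
    have k1 : m * (1+(x-l)^2) ≤ s^2 + (x-l)^2 := by
      nlinarith [mul_le_mul_of_nonneg_right h3 (sq_nonneg (x-l))]
    nlinarith [mul_le_mul_of_nonneg_left k1 (by positivity : (0:ℝ) ≤ s*π)]
  calc cauchyPdf l s x * Real.log (1 + (x-l)^2)
      ≤ (s/(π*m) * ((1 + (x-l)^2))⁻¹) * (4 * (1 + (x-l)^2) ^ ((4:ℝ)⁻¹)) := by
        apply mul_le_mul key2 key1 hlog (by positivity)
    _ = 4*s/(π*m) * ((1 + (x-l)^2) ^ ((4:ℝ)⁻¹) * ((1 + (x-l)^2))⁻¹) := by ring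
    _ = 4*s/(π*m) * ((1:ℝ) + (x - l) ^ 2) ^ (-(3/4 : ℝ)) := by
        congr 1
        rw [← Real.rpow_neg_one (1 + (x-l)^2), ← Real.rpow_add h1]
        norm_num

/-- Master integrability: Cauchy density times log of a positive quadratic. -/
lemma integrable_cauchy_log {l s a b : ℝ} (hs : 0 < s) (hb : 0 < b) :
    Integrable fun x : ℝ => cauchyPdf l s x * Real.log ((x - a) ^ 2 + b ^ 2) := by
  set K : ℝ := (2 + 2*(l-a)^2) * (1 + 1/b^2) with hK
  have hK1 : 1 ≤ K := by
    rw [hK]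
    have : 0 < 1/b^2 := by positivity
    nlinarith [sq_nonneg (l-a), sq_nonneg ((l-a)/b)]
  have hKpos : 0 < K := lt_of_lt_of_le one_pos hK1
  have hint : Integrable fun x : ℝ =>
      (2*|Real.log b| + Real.log K) * cauchyPdf l s x + cauchyPdf l s x * Real.log (1 + (x-l)^2) :=
    ((integrable_cauchyPdf hs).const_mul _).add (integrable_cauchy_log_center hs)
  apply hint.mono'
  · exact ((cont_cauchyPdf hs).mul
      (Continuous.log (by continuity) (fun x => by positivity))).aestronglyMeasurable
  filter_upwards with x
  have hπ := pi_pos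
  have hp := cauchyPdf_pos (l := l) hs x
  have h1 : (0:ℝ) < 1 + ((x-a)/b)^2 := by positivity
  have h2 : (0:ℝ) < 1 + (x-l)^2 := by positivity
  have hsplit : Real.log ((x - a) ^ 2 + b ^ 2) = 2*Real.log b + Real.log (1 + ((x-a)/b)^2) := by
    rw [show (2:ℝ)*Real.log b = Real.log (b^2) by rw [Real.log_pow]; push_cast; ring,
      ← Real.log_mul (by positivity) (ne_of_gt h1)]
    congr 1
    field_simp
    ring
  have hg0 : 0 ≤ Real.log (1 + ((x-a)/b)^2) := Real.log_nonneg (by nlinarith)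
  have hgle : Real.log (1 + ((x-a)/b)^2) ≤ Real.log K + Real.log (1 + (x-l)^2) := by
    rw [← Real.log_mul (ne_of_gt hKpos) (ne_of_gt h2)]
    apply Real.log_le_log h1
    have e : 1 + ((x-a)/b)^2 = (b^2+(x-a)^2)/b^2 := by field_simp
    rw [e, div_le_iff₀ (by positivity)]
    rw [show K * (1 + (x-l)^2) * b^2 = (2+2*(l-a)^2)*(b^2+1)*(1+(x-l)^2) by
      rw [hK]; field_simp]
    nlinarith [sq_nonneg ((x-l)-(l-a)), sq_nonneg ((x-l)*(l-a)), sq_nonneg (b*(x-l)),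
      sq_nonneg (b*(l-a)), sq_nonneg (b*(x-l)*(l-a)), sq_nonneg b, sq_nonneg (x-l), sq_nonneg (l-a)]
  rw [Real.norm_eq_abs, abs_mul, abs_of_pos hp, hsplit]
  have : |2*Real.log b + Real.log (1 + ((x-a)/b)^2)| ≤
      2*|Real.log b| + (Real.log K + Real.log (1 + (x-l)^2)) := by
    calc |2*Real.log b + Real.log (1 + ((x-a)/b)^2)|
        ≤ |2*Real.log b| + |Real.log (1 + ((x-a)/b)^2)| := abs_add_le _ _
      _ ≤ 2*|Real.log b| + (Real.log K + Real.log (1 + (x-l)^2)) := by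
          rw [abs_mul, abs_of_nonneg (by norm_num : (0:ℝ) ≤ 2), abs_of_nonneg hg0]
          exact add_le_add_right hgle _
  calc cauchyPdf l s x * |2*Real.log b + Real.log (1 + ((x-a)/b)^2)|
      ≤ cauchyPdf l s x * (2*|Real.log b| + (Real.log K + Real.log (1 + (x-l)^2))) :=
        mul_le_mul_of_nonneg_left this (le_of_lt hp)
    _ ≤ (2*|Real.log b| + Real.log K) * cauchyPdf l s x + cauchyPdf l s x * Real.log (1 + (x-l)^2) := by
        have hlogK : 0 ≤ Real.log K := Real.log_nonneg hK1
        nlinarith [hp]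

lemma hasDerivAt_quad {l : ℝ} (s : ℝ) (x : ℝ) :
    HasDerivAt (fun x : ℝ => s^2 + (x - l)^2) (2*(x-l)) x := by
  have h1 : HasDerivAt (fun x : ℝ => x - l) 1 x := (hasDerivAt_id x).sub_const l
  simpa using (h1.pow 2).const_add (s^2)

lemma hasDerivAt_log_quad {l s : ℝ} (hs : 0 < s) (x : ℝ) :
    HasDerivAt (fun x : ℝ => Real.log (s^2 + (x - l)^2)) (2*(x-l)/(s^2+(x-l)^2)) x :=
  (hasDerivAt_quad s x).log (by positivity)

lemma hasDerivAt_arctan_quad {l s : ℝ} (hs : 0 < s) (x : ℝ) :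
    HasDerivAt (fun x : ℝ => arctan ((x - l)/s)) (s/(s^2+(x-l)^2)) x := by
  have h1 : HasDerivAt (fun x : ℝ => (x - l)/s) (1/s) x := by
    simpa using ((hasDerivAt_id x).sub_const l).div_const s
  have h2 := (Real.hasDerivAt_arctan ((x - l)/s)).comp x h1
  refine h2.congr_deriv (Eq.symm ?_)
  have : 0 < s^2 + (x-l)^2 := by positivity
  field_simp

lemma tendsto_inv_atBot_zero'' : Tendsto (fun r : ℝ => r⁻¹) atBot (nhds 0) := by
  have h1 := (tendsto_inv_atTop_zero (𝕜 := ℝ)).comp tendsto_neg_atBot_atTop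
  have h2 := h1.neg
  simp only [Function.comp_def, neg_zero] at h2
  apply h2.congr
  intro x
  simp [inv_neg]

lemma tendsto_quad_ratio {l s a b : ℝ} (hb : 0 < b) :
    Tendsto (fun x : ℝ => (s^2+(x-l)^2)/(b^2+(x-a)^2)) atTop (nhds 1) ∧
    Tendsto (fun x : ℝ => (s^2+(x-l)^2)/(b^2+(x-a)^2)) atBot (nhds 1) := by
  set g : ℝ → ℝ := fun t => (s^2*t^2 + (1-l*t)^2)/(b^2*t^2 + (1-a*t)^2) with hg
  have hcont : ContinuousAt g 0 := by
    apply ContinuousAt.div (by fun_prop) (by fun_prop)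
    norm_num
  have hg0 : g 0 = 1 := by simp [hg]
  have key : ∀ x : ℝ, x ≠ 0 → g x⁻¹ = (s^2+(x-l)^2)/(b^2+(x-a)^2) := by
    intro x hx
    have hx2 : (x:ℝ)^2 ≠ 0 := pow_ne_zero _ hx
    have e1 : s^2*(x⁻¹)^2 + (1-l*x⁻¹)^2 = (s^2+(x-l)^2)/x^2 := by
      field_simp
      try ring
      try tauto
    have e2 : b^2*(x⁻¹)^2 + (1-a*x⁻¹)^2 = (b^2+(x-a)^2)/x^2 := by
      field_simp
      try ring
      try tauto
    rw [hg]
    simp only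
    rw [e1, e2, div_div_div_cancel_right₀ hx2]
  constructor
  · apply Tendsto.congr' _ (by rw [← hg0]; exact hcont.tendsto.comp tendsto_inv_atTop_zero)
    filter_upwards [eventually_gt_atTop 0] with x hx
    exact key x (ne_of_gt hx)
  · apply Tendsto.congr' _ (by rw [← hg0]; exact hcont.tendsto.comp tendsto_inv_atBot_zero'')
    filter_upwards [eventually_lt_atBot 0] with x hx
    exact key x (ne_of_lt hx)

lemma tendsto_linear_quad_ratio {l s : ℝ} (hs : 0 < s) :
    Tendsto (fun x : ℝ => (x-l)/(s^2+(x-l)^2)) atTop (nhds 0) ∧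
    Tendsto (fun x : ℝ => (x-l)/(s^2+(x-l)^2)) atBot (nhds 0) := by
  set g : ℝ → ℝ := fun t => (t*(1-l*t))/(s^2*t^2 + (1-l*t)^2) with hg
  have hcont : ContinuousAt g 0 := by
    apply ContinuousAt.div (by fun_prop) (by fun_prop)
    norm_num
  have hg0 : g 0 = 0 := by simp [hg]
  have key : ∀ x : ℝ, x ≠ 0 → g x⁻¹ = (x-l)/(s^2+(x-l)^2) := by
    intro x hx
    have hx2 : (x:ℝ)^2 ≠ 0 := pow_ne_zero _ hx
    have e1 : x⁻¹*(1-l*x⁻¹) = (x-l)/x^2 := by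
      field_simp
      try ring
      try tauto
    have e2 : s^2*(x⁻¹)^2 + (1-l*x⁻¹)^2 = (s^2+(x-l)^2)/x^2 := by
      field_simp
      try ring
      try tauto
    rw [hg]
    simp only
    rw [e1, e2, div_div_div_cancel_right₀ hx2]
  constructor
  · apply Tendsto.congr' _ (by rw [← hg0]; exact hcont.tendsto.comp tendsto_inv_atTop_zero)
    filter_upwards [eventually_gt_atTop 0] with x hx
    exact key x (ne_of_gt hx)
  · apply Tendsto.congr' _ (by rw [← hg0]; exact hcont.tendsto.comp tendsto_inv_atBot_zero'')
    filter_upwards [eventually_lt_atBot 0] with x hx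
    exact key x (ne_of_lt hx)

set_option maxHeartbeats 1000000 in
lemma frac_combine (s b q u x l a d0 d1 dd : ℝ) (hd0 : d0 ≠ 0) (hd1 : d1 ≠ 0)
    (hdd : dd ≠ 0) (hq : q ≠ 0) (hs : s ≠ 0) (hb : b ≠ 0)
    (key : (2*u*(x-l)+b^2-s^2+u^2)*d1 + (-(2*u)*(x-a)+s^2-b^2+u^2)*d0 = dd) :
    s/(q*d0) * (2*b/d1) =
      2*s*b/q * ((2*u/dd/2)*(2*(x-l)/d0 - 2*(x-a)/d1)
        + ((b^2-s^2+u^2)/dd/s)*(s/d0) + ((s^2-b^2+u^2)/dd/b)*(b/d1)) := by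
  have e1 : (2*u/dd/2)*(2*(x-l)/d0 - 2*(x-a)/d1)
        + ((b^2-s^2+u^2)/dd/s)*(s/d0) + ((s^2-b^2+u^2)/dd/b)*(b/d1)
      = ((2*u*(x-l)+b^2-s^2+u^2)*d1 + (-(2*u)*(x-a)+s^2-b^2+u^2)*d0)/(dd*(d0*d1)) := by
    field_simp
    ring
  rw [e1, key]
  field_simp

lemma tendsto_arctan_quad_top {l s : ℝ} (hs : 0 < s) :
    Tendsto (fun x : ℝ => arctan ((x - l)/s)) atTop (nhds (π/2)) := by
  apply (tendsto_nhds_of_tendsto_nhdsWithin Real.tendsto_arctan_atTop).comp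
  apply Tendsto.atTop_div_const hs
  exact tendsto_atTop_add_const_right _ _ tendsto_id

lemma tendsto_arctan_quad_bot {l s : ℝ} (hs : 0 < s) :
    Tendsto (fun x : ℝ => arctan ((x - l)/s)) atBot (nhds (-(π/2))) := by
  apply (tendsto_nhds_of_tendsto_nhdsWithin Real.tendsto_arctan_atBot).comp
  apply Tendsto.atBot_div_const hs
  exact tendsto_atBot_add_const_right _ _ tendsto_id

lemma tendsto_log_quad_ratio {l s a b : ℝ} (hs : 0 < s) (hb : 0 < b) :
    Tendsto (fun x : ℝ => Real.log (s^2+(x-l)^2) - Real.log (b^2+(x-a)^2)) atTop (nhds 0) ∧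
    Tendsto (fun x : ℝ => Real.log (s^2+(x-l)^2) - Real.log (b^2+(x-a)^2)) atBot (nhds 0) := by
  have hc := (Real.continuousAt_log one_ne_zero).tendsto
  rw [Real.log_one] at hc
  constructor
  · apply (hc.comp (tendsto_quad_ratio (l := l) (s := s) (a := a) (b := b) hb).1).congr
    intro x
    exact Real.log_div (by positivity) (by positivity)
  · apply (hc.comp (tendsto_quad_ratio (l := l) (s := s) (a := a) (b := b) hb).2).congr
    intro x
    exact Real.log_div (by positivity) (by positivity)

lemma integrable_cauchy_mul_kernel {l s a b : ℝ} (hs : 0 < s) (hb : 0 < b) :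
    Integrable fun x : ℝ => cauchyPdf l s x * (2*b/((x-a)^2+b^2)) := by
  apply ((integrable_cauchyPdf hs).const_mul (2/b)).mono'
  · apply Continuous.aestronglyMeasurable
    apply (cont_cauchyPdf hs).mul
    apply continuous_const.div (by continuity)
    intro x; positivity
  filter_upwards with x
  have hp := cauchyPdf_pos (l := l) hs x
  have h1 : (0:ℝ) < (x-a)^2 + b^2 := by positivity
  rw [Real.norm_eq_abs, abs_of_nonneg (by positivity)]
  rw [mul_comm (2/b) _]
  apply mul_le_mul_of_nonneg_left _ (le_of_lt hp)
  rw [div_le_div_iff₀ h1 hb]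
  nlinarith [sq_nonneg (x-a), sq_nonneg (x-a-b)]

/-- The product-type integral in the non-degenerate case. -/
lemma integral_cauchy_kernel {l s a b : ℝ} (hs : 0 < s) (hb : 0 < b)
    (hne : (a-l)^2 + (s-b)^2 ≠ 0) :
    ∫ x : ℝ, cauchyPdf l s x * (2*b/((x-a)^2+b^2)) =
      2*(s+b)/((a-l)^2+(s+b)^2) := by
  set u : ℝ := a - l with hu
  set Δ : ℝ := (u^2+(s+b)^2) * (u^2+(s-b)^2) with hΔ
  have hΔ1 : (0:ℝ) < u^2+(s+b)^2 := by positivity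
  have hΔ2 : (0:ℝ) < u^2+(s-b)^2 := by
    rcases (lt_or_eq_of_le (by positivity : (0:ℝ) ≤ u^2+(s-b)^2)) with h | h
    · exact h
    · exact absurd h.symm hne
  have hΔpos : 0 < Δ := mul_pos hΔ1 hΔ2
  set A : ℝ := 2*u/Δ with hA
  set B : ℝ := (b^2-s^2+u^2)/Δ with hB
  set E : ℝ := (s^2-b^2+u^2)/Δ with hE
  have hπ := pi_pos
  set H : ℝ → ℝ := fun x => (2*s*b/π) * ( (A/2) * (Real.log (s^2+(x-l)^2) - Real.log (b^2+(x-a)^2))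
      + (B/s) * arctan ((x-l)/s) + (E/b) * arctan ((x-a)/b) ) with hH
  have hderiv : ∀ x : ℝ, HasDerivAt H (cauchyPdf l s x * (2*b/((x-a)^2+b^2))) x := by
    intro x
    rw [show (x-a)^2+b^2 = b^2+(x-a)^2 by ring]
    have h0 : (0:ℝ) < s^2+(x-l)^2 := by positivity
    have h1 : (0:ℝ) < b^2+(x-a)^2 := by positivity
    have d1 := ((hasDerivAt_log_quad (l := l) hs x).sub (hasDerivAt_log_quad (l := a) hb x)).const_mul (A/2)
    have d2 := (hasDerivAt_arctan_quad (l := l) hs x).const_mul (B/s)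
    have d3 := (hasDerivAt_arctan_quad (l := a) hb x).const_mul (E/b)
    have d := ((d1.add d2).add d3).const_mul (2*s*b/π)
    have key : (2*u*(x-l) + (b^2-s^2+u^2)) * (b^2+(x-a)^2)
        + (-(2*u)*(x-a) + (s^2-b^2+u^2)) * (s^2+(x-l)^2) = Δ := by
      rw [hΔ, hu]; ring
    refine d.congr_deriv (Eq.symm ?_)
    unfold cauchyPdf
    rw [hA, hB, hE]
    exact frac_combine s b π u x l a _ _ Δ (ne_of_gt h0) (ne_of_gt h1) (ne_of_gt hΔpos)
      pi_ne_zero (ne_of_gt hs) (ne_of_gt hb) (by rw [← key]; ring)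
  have htop : Tendsto H atTop
      (nhds ((2*s*b/π) * ((A/2) * 0 + (B/s) * (π/2) + (E/b) * (π/2)))) := by
    apply Tendsto.const_mul
    exact (((tendsto_log_quad_ratio hs hb).1.const_mul (A/2)).add
      ((tendsto_arctan_quad_top (l := l) hs).const_mul (B/s))).add
      ((tendsto_arctan_quad_top (l := a) hb).const_mul (E/b))
  have hbot : Tendsto H atBot
      (nhds ((2*s*b/π) * ((A/2) * 0 + (B/s) * (-(π/2)) + (E/b) * (-(π/2))))) := by
    apply Tendsto.const_mul
    exact (((tendsto_log_quad_ratio hs hb).2.const_mul (A/2)).add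
      ((tendsto_arctan_quad_bot (l := l) hs).const_mul (B/s))).add
      ((tendsto_arctan_quad_bot (l := a) hb).const_mul (E/b))
  have heq := integral_of_hasDerivAt_of_tendsto hderiv
    (integrable_cauchy_mul_kernel hs hb) hbot htop
  rw [heq, hB, hE, hΔ]
  have h2 : ((u:ℝ)^2+(s-b)^2) ≠ 0 := hne
  field_simp
  ring

lemma integral_cauchy_kernel_self {l s : ℝ} (hs : 0 < s) :
    ∫ x : ℝ, cauchyPdf l s x * (2*s/((x-l)^2+s^2)) = 1/s := by
  have hπ := pi_pos
  set H : ℝ → ℝ := fun x => (1/π) * ((x-l)/(s^2+(x-l)^2)) + (1/(π*s)) * arctan ((x-l)/s)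
    with hH
  have hderiv : ∀ x : ℝ, HasDerivAt H (cauchyPdf l s x * (2*s/((x-l)^2+s^2))) x := by
    intro x
    have h0 : (0:ℝ) < s^2+(x-l)^2 := by positivity
    have d1 : HasDerivAt (fun x : ℝ => (x-l)/(s^2+(x-l)^2))
        ((1*(s^2+(x-l)^2) - (x-l)*(2*(x-l)))/(s^2+(x-l)^2)^2) x :=
      ((hasDerivAt_id x).sub_const l).div (hasDerivAt_quad s x) (ne_of_gt h0)
    have d := (d1.const_mul (1/π)).add
      ((hasDerivAt_arctan_quad (l := l) hs x).const_mul (1/(π*s)))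
    refine d.congr_deriv (Eq.symm ?_)
    unfold cauchyPdf
    rw [show (x-l)^2+s^2 = s^2+(x-l)^2 by ring]
    field_simp
    ring
  have htop : Tendsto H atTop (nhds ((1/π) * 0 + (1/(π*s)) * (π/2))) :=
    ((tendsto_linear_quad_ratio (l := l) hs).1.const_mul (1/π)).add
      ((tendsto_arctan_quad_top (l := l) hs).const_mul (1/(π*s)))
  have hbot : Tendsto H atBot (nhds ((1/π) * 0 + (1/(π*s)) * (-(π/2)))) :=
    ((tendsto_linear_quad_ratio (l := l) hs).2.const_mul (1/π)).add
      ((tendsto_arctan_quad_bot (l := l) hs).const_mul (1/(π*s)))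
  have heq := integral_of_hasDerivAt_of_tendsto hderiv
    (by simpa using integrable_cauchy_mul_kernel (a := l) (b := s) hs hs) hbot htop
  rw [heq]
  field_simp
  ring

/-- The product-type integral, all cases. -/
lemma integral_cauchy_kernel' {l s a b : ℝ} (hs : 0 < s) (hb : 0 < b) :
    ∫ x : ℝ, cauchyPdf l s x * (2*b/((x-a)^2+b^2)) =
      2*(s+b)/((a-l)^2+(s+b)^2) := by
  by_cases hne : (a-l)^2 + (s-b)^2 = 0
  · have ha : a = l := by nlinarith [sq_nonneg (a-l), sq_nonneg (s-b)]
    have hbs : b = s := by nlinarith [sq_nonneg (a-l), sq_nonneg (s-b)]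
    subst ha hbs
    rw [integral_cauchy_kernel_self hs]
    rw [show a - a = 0 by ring]
    field_simp
    ring
  · exact integral_cauchy_kernel hs hb hne

lemma cont_cauchy_log {l s a b : ℝ} (hs : 0 < s) (hb : b ≠ 0) :
    Continuous fun x : ℝ => cauchyPdf l s x * Real.log ((x - a)^2 + b^2) := by
  apply (cont_cauchyPdf hs).mul
  apply Continuous.log (by continuity)
  intro x
  have : b^2 > 0 := by positivity
  positivity

lemma hasDerivAt_cauchy_log_integral {l s a : ℝ} (hs : 0 < s) {b0 : ℝ} (hb0 : 0 < b0) :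
    HasDerivAt (fun b => ∫ x : ℝ, cauchyPdf l s x * Real.log ((x - a)^2 + b^2))
      (2*(s+b0)/((a-l)^2+(s+b0)^2)) b0 := by
  have hmain := hasDerivAt_integral_of_dominated_loc_of_deriv_le (μ := volume)
    (F := fun b x => cauchyPdf l s x * Real.log ((x - a)^2 + b^2))
    (F' := fun b x => cauchyPdf l s x * (2*b/((x-a)^2+b^2)))
    (x₀ := b0) (s := Metric.ball b0 (b0/2)) (bound := fun x => cauchyPdf l s x * (4/b0))
    (Metric.ball_mem_nhds b0 (half_pos hb0)) ?_ ?_ ?_ ?_ ?_ ?_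
  · have h2 := hmain.2
    have heq := integral_cauchy_kernel' (l := l) (a := a) hs hb0
    rw [heq] at h2
    exact h2
  · filter_upwards [Metric.ball_mem_nhds b0 (half_pos hb0)] with b hb
    have hbpos : 0 < b := by
      rw [Metric.mem_ball, Real.dist_eq] at hb
      cases abs_lt.mp hb; linarith
    exact (cont_cauchy_log hs (ne_of_gt hbpos)).aestronglyMeasurable
  · exact integrable_cauchy_log hs hb0
  · apply Continuous.aestronglyMeasurable
    apply (cont_cauchyPdf hs).mul
    apply continuous_const.div (by continuity)
    intro x
    have : b0^2 > 0 := by positivity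
    positivity
  · filter_upwards with x
    intro b hb
    rw [Metric.mem_ball, Real.dist_eq] at hb
    have h1 : b0/2 < b := by cases abs_lt.mp hb; linarith
    have h2 : 0 < b := lt_trans (half_pos hb0) h1
    have hp := cauchyPdf_pos (l := l) hs x
    rw [Real.norm_eq_abs, abs_of_nonneg (by positivity)]
    apply mul_le_mul_of_nonneg_left _ (le_of_lt hp)
    rw [div_le_div_iff₀ (by positivity) hb0]
    nlinarith [sq_nonneg (x-a), sq_nonneg (x-a-b), mul_pos h2 (sub_pos.mpr h1), sq_nonneg (x-a), mul_nonneg (mul_nonneg (le_of_lt h2) (le_of_lt hb0)) (sq_nonneg (x-a))]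
  · exact (integrable_cauchyPdf hs).mul_const _
  · filter_upwards with x
    intro b hb
    rw [Metric.mem_ball, Real.dist_eq] at hb
    have h1 : 0 < b := by cases abs_lt.mp hb; linarith
    have hq : HasDerivAt (fun b : ℝ => (x-a)^2 + b^2) (2*b) b := by
      simpa using (((hasDerivAt_id b).pow 2).const_add ((x-a)^2))
    have harg : (0:ℝ) < (x-a)^2 + b^2 := by positivity
    exact (hq.log (ne_of_gt harg)).const_mul (cauchyPdf l s x)

lemma log_split_t {a t : ℝ} (ht : 0 < t) (x : ℝ) :
    Real.log ((x-a)^2 + t^2) = 2*Real.log t + Real.log (1+((x-a)/t)^2) := by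
  have h1 : (0:ℝ) < 1 + ((x-a)/t)^2 := by positivity
  rw [show (2:ℝ)*Real.log t = Real.log (t^2) by rw [Real.log_pow]; push_cast; ring,
    ← Real.log_mul (by positivity) (ne_of_gt h1)]
  congr 1
  field_simp
  ring

/-- The fundamental Cauchy log integral. -/
lemma integral_cauchy_log_eq {l s a b : ℝ} (hs : 0 < s) (hb : 0 < b) :
    ∫ x : ℝ, cauchyPdf l s x * Real.log ((x - a)^2 + b^2) =
      Real.log ((l-a)^2 + (s+b)^2) := by
  set F : ℝ → ℝ := fun t => ∫ x : ℝ, cauchyPdf l s x * Real.log ((x - a)^2 + t^2) with hF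
  set R : ℝ → ℝ := fun t => Real.log ((a-l)^2 + (s+t)^2) with hR
  set φ : ℝ → ℝ := fun t => F t - R t with hφ
  have hRd : ∀ t : ℝ, 0 < t → HasDerivAt R (2*(s+t)/((a-l)^2+(s+t)^2)) t := by
    intro t ht
    have hq : HasDerivAt (fun t : ℝ => (a-l)^2 + (s+t)^2) (2*(s+t)) t := by
      have h1 : HasDerivAt (fun t : ℝ => s + t) 1 t := (hasDerivAt_id t).const_add s
      simpa using ((h1.pow 2).const_add ((a-l)^2))
    exact hq.log (by positivity)
  have hφd : ∀ t : ℝ, 0 < t → HasDerivAt φ 0 t := by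
    intro t ht
    have := (hasDerivAt_cauchy_log_integral (l := l) (a := a) hs ht).sub (hRd t ht)
    exact this.congr_deriv (sub_self _)
  have hconst : ∀ T : ℝ, b ≤ T → φ T = φ b := by
    intro T hT
    have h1 := constant_of_has_deriv_right_zero (f := φ) (a := b) (b := T)
      (fun x hx => by
        have hx0 : 0 < x := lt_of_lt_of_le hb hx.1
        exact (hφd x hx0).continuousAt.continuousWithinAt)
      (fun x hx => by
        have hx0 : 0 < x := lt_of_lt_of_le hb hx.1
        exact (hφd x hx0).hasDerivWithinAt)
    exact h1 T ⟨hT, le_refl T⟩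
  have hpart2 : Tendsto (fun t : ℝ => R t - 2 * Real.log t) atTop (nhds 0) := by
    have hcont : Continuous (fun u : ℝ => (a-l)^2*u^2 + (1+s*u)^2) := by continuity
    have hc0 : Tendsto (fun t : ℝ => (a-l)^2*(t⁻¹)^2 + (1+s*t⁻¹)^2) atTop
        (nhds ((a-l)^2*(0:ℝ)^2 + (1+s*0)^2)) :=
      hcont.continuousAt.tendsto.comp tendsto_inv_atTop_zero
    have hc : Tendsto (fun t : ℝ => ((a-l)^2 + (s+t)^2)/t^2) atTop (nhds 1) := by
      apply Tendsto.congr' _ (by norm_num at hc0 ⊢; exact hc0)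
      filter_upwards [eventually_gt_atTop 0] with t ht
      have ht2 : (t:ℝ)^2 ≠ 0 := by positivity
      field_simp
      ring
    have hlog := (Real.continuousAt_log one_ne_zero).tendsto.comp hc
    rw [Real.log_one] at hlog
    apply Tendsto.congr' _ hlog
    filter_upwards [eventually_gt_atTop 0] with t ht
    rw [Function.comp_apply, Real.log_div (by positivity) (by positivity), hR]
    rw [show (2:ℝ)*Real.log t = Real.log (t^2) by rw [Real.log_pow]; push_cast; ring]
  have hpart1 : Tendsto (fun t : ℝ => F t - 2 * Real.log t) atTop (nhds 0) := by
    have hdct := tendsto_integral_filter_of_dominated_convergence (μ := volume) (l := atTop)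
      (F := fun (t:ℝ) (x:ℝ) => cauchyPdf l s x * Real.log (1 + ((x-a)/t)^2))
      (f := fun _ : ℝ => (0:ℝ))
      (bound := fun x => cauchyPdf l s x * Real.log ((x-a)^2 + 1))
      ?_ ?_ ?_ ?_
    · rw [integral_zero] at hdct
      apply Tendsto.congr' _ hdct
      filter_upwards [eventually_gt_atTop 0] with t ht
      have hint1 : Integrable (fun x : ℝ => cauchyPdf l s x * Real.log ((x-a)^2 + t^2)) :=
        integrable_cauchy_log hs ht
      have hint2 : Integrable (fun x : ℝ => cauchyPdf l s x * (2*Real.log t)) :=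
        (integrable_cauchyPdf hs).mul_const _
      have hint3 : Integrable (fun x : ℝ => cauchyPdf l s x * Real.log (1 + ((x-a)/t)^2)) := by
        apply (hint1.sub hint2).congr
        filter_upwards with x
        simp only [Pi.sub_apply]
        rw [log_split_t ht x]
        ring
      have e1 : F t = ∫ x : ℝ, (cauchyPdf l s x * Real.log (1 + ((x-a)/t)^2)
          + cauchyPdf l s x * (2*Real.log t)) := by
        rw [hF]
        apply integral_congr_ae
        filter_upwards with x
        rw [log_split_t ht x]
        ring
      rw [e1, integral_add hint3 hint2, integral_mul_const, integral_cauchyPdf hs]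
      ring
    · filter_upwards [eventually_ge_atTop 1] with t ht
      apply Continuous.aestronglyMeasurable
      apply (cont_cauchyPdf hs).mul
      apply Continuous.log (by continuity)
      intro x
      positivity
    · filter_upwards [eventually_ge_atTop 1] with t ht
      filter_upwards with x
      have hp := cauchyPdf_pos (l := l) hs x
      have harg : (0:ℝ) < 1 + ((x-a)/t)^2 := by positivity
      have hlognn : 0 ≤ Real.log (1 + ((x-a)/t)^2) := Real.log_nonneg (by nlinarith)
      rw [Real.norm_eq_abs, abs_of_nonneg (by positivity)]
      apply mul_le_mul_of_nonneg_left _ (le_of_lt hp)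
      apply Real.log_le_log harg
      have ht0 : (0:ℝ) < t := lt_of_lt_of_le one_pos ht
      have : ((x-a)/t)^2 ≤ (x-a)^2 := by
        rw [div_pow, div_le_iff₀ (by positivity)]
        nlinarith [sq_nonneg (x-a), sq_nonneg (t-1), sq_nonneg ((x-a)*(t-1))]
      linarith
    · exact (by simpa using integrable_cauchy_log (a := a) hs one_pos)
    · filter_upwards with x
      have h1 : Tendsto (fun t : ℝ => (x-a) * t⁻¹) atTop (nhds 0) := by
        simpa using tendsto_inv_atTop_zero.const_mul (x-a)
      have hcont : ContinuousAt (fun u : ℝ => cauchyPdf l s x * Real.log (1+u^2)) 0 := by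
        apply ContinuousAt.mul continuousAt_const
        apply ContinuousAt.log (by fun_prop)
        norm_num
      have := hcont.tendsto.comp h1
      norm_num at this
      apply this.congr
      intro t
      simp [Function.comp, div_eq_mul_inv]
  have hφtop : Tendsto φ atTop (nhds 0) := by
    have := hpart1.sub hpart2
    rw [sub_zero] at this
    apply this.congr
    intro t
    rw [hφ]
    ring
  have hφb : φ b = 0 := by
    have h1 : Tendsto φ atTop (nhds (φ b)) := by
      apply Tendsto.congr' _ (tendsto_const_nhds (x := φ b))
      filter_upwards [eventually_ge_atTop b] with T hT
      exact (hconst T hT).symm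
    exact tendsto_nhds_unique h1 hφtop
  have : F b = R b := by simp only [hφ] at hφb; linarith [hφb]
  simp only [hF, hR] at this
  rw [show ((l:ℝ)-a)^2 = (a-l)^2 by ring]
  exact this


/-- Closed form of the cross-entropy between a Cauchy density and a mixture of
two Cauchy densities. -/
theorem cross_entropy_cauchy_mixture (l0 l1 s0 s1 θ : ℝ) (hs0 : 0 < s0) (hs1 : 0 < s1)
    (hθ : θ ∈ Set.Ioo (0 : ℝ) 1) :
    -∫ x : ℝ, cauchyPdf l0 s0 x *
        Real.log ((1 - θ) * cauchyPdf l0 s0 x + θ * cauchyPdf l1 s1 x) =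
      Real.log (4 * π * s0) +
        Real.log (((l0 - l1) ^ 2 + (s0 + s1) ^ 2) /
          ((1 - θ) * (s0 ^ 2 + s1 ^ 2 + (l0 - l1) ^ 2) + 2 * θ * s0 * s1 +
            2 * Real.sqrt (s0 ^ 2 * s1 ^ 2 +
              s0 * s1 * ((s0 - s1) ^ 2 + (l0 - l1) ^ 2) * θ * (1 - θ)))) := by
  obtain ⟨hθ0, hθ1⟩ := hθ
  have hθ1' : 0 < 1 - θ := by linarith
  have hπ := pi_pos
  set α : ℝ := (1-θ)*s0 + θ*s1 with hα
  set β : ℝ := (1-θ)*s0*l1 + θ*s1*l0 with hβ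
  set Δ : ℝ := s0^2*s1^2 + s0*s1*((s0-s1)^2+(l0-l1)^2)*θ*(1-θ) with hΔ
  have hαpos : 0 < α := by rw [hα]; positivity
  have hΔpos : 0 < Δ := by
    rw [hΔ]
    have h1 : (0:ℝ) < s0^2*s1^2 := by positivity
    have h2 : (0:ℝ) ≤ s0*s1*((s0-s1)^2+(l0-l1)^2)*θ*(1-θ) := by positivity
    linarith
  set W : ℝ := Real.sqrt Δ with hWdef
  have hW2 : W^2 = Δ := Real.sq_sqrt (le_of_lt hΔpos)
  have hWpos : 0 < W := Real.sqrt_pos.mpr hΔpos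
  set u : ℝ := β/α with hu
  set w : ℝ := W/α with hw
  have hwpos : 0 < w := by rw [hw]; positivity
  set E0 : ℝ := (1-θ)*(s0^2+s1^2+(l0-l1)^2) + 2*θ*s0*s1 with hE0
  -- numerator identity
  have hpoly2 : ∀ x : ℝ, (α*x-β)^2 + Δ
      = α*((1-θ)*s0*((x-l1)^2+s1^2) + θ*s1*((x-l0)^2+s0^2)) := by
    intro x
    rw [hα, hβ, hΔ]
    ring
  have hN : ∀ x : ℝ, α*((x-u)^2+w^2)
      = (1-θ)*s0*((x-l1)^2+s1^2) + θ*s1*((x-l0)^2+s0^2) := by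
    intro x
    have hα' : α ≠ 0 := ne_of_gt hαpos
    have e : α*((x-u)^2+w^2) = ((α*x-β)^2 + W^2)/α := by
      rw [hu, hw]
      field_simp
    rw [e, show (α*x-β)^2 + W^2 = α*((1-θ)*s0*((x-l1)^2+s1^2) + θ*s1*((x-l0)^2+s0^2)) by
      linear_combination hpoly2 x + hW2, mul_div_cancel_left₀ _ hα']
  -- the key closed-form identity
  have hpoly : (α*l0-β)^2 + α^2*s0^2 + Δ = α*s0*E0 := by
    rw [hα, hβ, hΔ, hE0]
    ring
  have key : α*((l0-u)^2+(s0+w)^2) = s0*(E0 + 2*W) := by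
    have hα' : α ≠ 0 := ne_of_gt hαpos
    have e2 : α*((l0-u)^2+(s0+w)^2) = ((α*l0-β)^2 + (α*s0+W)^2)/α := by
      rw [hu, hw]
      field_simp
    rw [e2, show (α*l0-β)^2 + (α*s0+W)^2 = α*(s0*(E0+2*W)) by
      linear_combination hpoly + hW2, mul_div_cancel_left₀ _ hα']
  -- positivity of denominators
  have hD0 : ∀ x : ℝ, (0:ℝ) < (x-l0)^2+s0^2 := fun x => by positivity
  have hD1 : ∀ x : ℝ, (0:ℝ) < (x-l1)^2+s1^2 := fun x => by positivity
  have hNpos : ∀ x : ℝ, (0:ℝ) < (1-θ)*s0*((x-l1)^2+s1^2) + θ*s1*((x-l0)^2+s0^2) := by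
    intro x
    have := hD0 x; have := hD1 x
    positivity
  -- mixture decomposition
  have hm : ∀ x : ℝ, (1-θ)*cauchyPdf l0 s0 x + θ*cauchyPdf l1 s1 x
      = ((1-θ)*s0*((x-l1)^2+s1^2) + θ*s1*((x-l0)^2+s0^2))
        / (π*(((x-l0)^2+s0^2)*((x-l1)^2+s1^2))) := by
    intro x
    unfold cauchyPdf
    have h0 := hD0 x
    have h1 := hD1 x
    have h0' : s0^2 + (x-l0)^2 ≠ 0 := by positivity
    have h1' : s1^2 + (x-l1)^2 ≠ 0 := by positivity
    field_simp
    ring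
  -- pointwise log split
  have hsplit : ∀ x : ℝ, cauchyPdf l0 s0 x *
        Real.log ((1 - θ) * cauchyPdf l0 s0 x + θ * cauchyPdf l1 s1 x)
      = cauchyPdf l0 s0 x * Real.log α + cauchyPdf l0 s0 x * Real.log ((x-u)^2+w^2)
        - cauchyPdf l0 s0 x * Real.log π - cauchyPdf l0 s0 x * Real.log ((x-l0)^2+s0^2)
        - cauchyPdf l0 s0 x * Real.log ((x-l1)^2+s1^2) := by
    intro x
    rw [hm x, Real.log_div (ne_of_gt (hNpos x)) (by positivity : π*(((x-l0)^2+s0^2)*((x-l1)^2+s1^2)) ≠ 0)]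
    rw [Real.log_mul (ne_of_gt hπ) (by positivity : ((x-l0)^2+s0^2)*((x-l1)^2+s1^2) ≠ 0)]
    rw [Real.log_mul (ne_of_gt (hD0 x)) (ne_of_gt (hD1 x))]
    rw [← hN x, Real.log_mul (ne_of_gt hαpos) (by positivity : (x-u)^2+w^2 ≠ 0)]
    ring
  -- integrability of the pieces
  have I1 : Integrable (fun x : ℝ => cauchyPdf l0 s0 x * Real.log α) :=
    (integrable_cauchyPdf hs0).mul_const _
  have I2 : Integrable (fun x : ℝ => cauchyPdf l0 s0 x * Real.log ((x-u)^2+w^2)) :=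
    integrable_cauchy_log hs0 hwpos
  have I3 : Integrable (fun x : ℝ => cauchyPdf l0 s0 x * Real.log π) :=
    (integrable_cauchyPdf hs0).mul_const _
  have I4 : Integrable (fun x : ℝ => cauchyPdf l0 s0 x * Real.log ((x-l0)^2+s0^2)) :=
    integrable_cauchy_log hs0 hs0
  have I5 : Integrable (fun x : ℝ => cauchyPdf l0 s0 x * Real.log ((x-l1)^2+s1^2)) :=
    integrable_cauchy_log hs0 hs1
  have hInt : (∫ x : ℝ, cauchyPdf l0 s0 x *
        Real.log ((1 - θ) * cauchyPdf l0 s0 x + θ * cauchyPdf l1 s1 x))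
      = Real.log α + Real.log ((l0-u)^2+(s0+w)^2) - Real.log π
        - Real.log ((l0-l0)^2+(s0+s0)^2) - Real.log ((l0-l1)^2+(s0+s1)^2) := by
    rw [integral_congr_ae (Filter.Eventually.of_forall hsplit)]
    have I12 : Integrable (fun x : ℝ => cauchyPdf l0 s0 x * Real.log α
        + cauchyPdf l0 s0 x * Real.log ((x-u)^2+w^2)) := I1.add I2
    have I123 : Integrable (fun x : ℝ => cauchyPdf l0 s0 x * Real.log α
        + cauchyPdf l0 s0 x * Real.log ((x-u)^2+w^2) - cauchyPdf l0 s0 x * Real.log π) :=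
      I12.sub I3
    have I1234 : Integrable (fun x : ℝ => cauchyPdf l0 s0 x * Real.log α
        + cauchyPdf l0 s0 x * Real.log ((x-u)^2+w^2) - cauchyPdf l0 s0 x * Real.log π
        - cauchyPdf l0 s0 x * Real.log ((x-l0)^2+s0^2)) := I123.sub I4
    rw [integral_sub I1234 I5, integral_sub I123 I4, integral_sub I12 I3, integral_add I1 I2]
    rw [integral_mul_const, integral_mul_const (Real.log π), integral_cauchyPdf hs0]
    rw [integral_cauchy_log_eq hs0 hwpos, integral_cauchy_log_eq hs0 hs0,
      integral_cauchy_log_eq hs0 hs1]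
    ring
  rw [hInt]
  -- final log algebra
  have hB1pos : (0:ℝ) < (l0-l1)^2+(s0+s1)^2 := by positivity
  have hEpos : (0:ℝ) < E0 + 2*W := by
    have : (0:ℝ) < E0 := by rw [hE0]; positivity
    linarith
  have hA2pos : (0:ℝ) < (l0-u)^2+(s0+w)^2 := by positivity
  have hlogkey : Real.log α + Real.log ((l0-u)^2+(s0+w)^2) = Real.log s0 + Real.log (E0+2*W) := by
    rw [← Real.log_mul (ne_of_gt hαpos) (ne_of_gt hA2pos), key,
      Real.log_mul (ne_of_gt hs0) (ne_of_gt hEpos)]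
  rw [show ((l0:ℝ)-l0)^2+(s0+s0)^2 = 4*s0^2*1 by ring]
  rw [show (1 - θ) * (s0 ^ 2 + s1 ^ 2 + (l0 - l1) ^ 2) + 2 * θ * s0 * s1 +
      2 * Real.sqrt (s0 ^ 2 * s1 ^ 2 + s0 * s1 * ((s0 - s1) ^ 2 + (l0 - l1) ^ 2) * θ * (1 - θ))
      = E0 + 2*W by rw [hE0, hWdef, hΔ]]
  rw [Real.log_div (ne_of_gt hB1pos) (ne_of_gt hEpos)]
  rw [show ((l0:ℝ) - l1) ^ 2 + (s0 + s1) ^ 2 = (l0-l1)^2+(s0+s1)^2 by ring]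
  have e4 : Real.log (4*s0^2*1) = Real.log 4 + 2*Real.log s0 := by
    rw [mul_one, Real.log_mul (by norm_num) (by positivity), Real.log_pow]
    push_cast; ring
  have e5 : Real.log (4*π*s0) = Real.log 4 + Real.log π + Real.log s0 := by
    rw [Real.log_mul (by positivity) (ne_of_gt hs0), Real.log_mul (by norm_num) (ne_of_gt hπ)]
  rw [e4, e5]
  linarith [hlogkey]
end

section
/- Let μ be a σ-finite measure, let p0 and p1 be probability densities with respect to μ, and for θ ∈ (0,1) set m_θ = (1−θ)·p0 + θ·p1. Let θ1, θ2 ∈ (0,1) and assume that m_{θ1}·log(m_{θ1}/m_{θ2}), m_{θ2}·log(m_{θ2}/m_{θ1}), p0·(log m_{θ2} − log m_{θ1}) and p1·(log m_{θ2} − log m_{θ1}) are μ-integrable. Then the Jeffreys divergence satisfies ∫ m_{θ1}·log(m_{θ1}/m_{θ2}) dμ + ∫ m_{θ2}·log(m_{θ2}/m_{θ1}) dμ = (θ2 − θ1)·∫ (p1 − p0)·(log m_{θ2} − log m_{θ1}) dμ. -/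
open MeasureTheory Real

/-- The Jeffreys divergence between two mixtures of a two-component mixture family
equals `(θ2 − θ1)·(η(θ2) − η(θ1))`. -/
theorem jeffreys_mixture_family {X : Type*} [MeasurableSpace X] (μ : Measure X)
    [SigmaFinite μ] (p0 p1 : X → ℝ) (hp0 : Measurable p0) (hp1 : Measurable p1)
    (hp0nn : ∀ x, 0 ≤ p0 x) (hp1nn : ∀ x, 0 ≤ p1 x)
    (hp0int : ∫ x, p0 x ∂μ = 1) (hp1int : ∫ x, p1 x ∂μ = 1)
    (m : ℝ → X → ℝ) (hm : m = fun θ x => (1 - θ) * p0 x + θ * p1 x)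
    (θ1 θ2 : ℝ) (hθ1 : θ1 ∈ Set.Ioo (0 : ℝ) 1) (hθ2 : θ2 ∈ Set.Ioo (0 : ℝ) 1)
    (h12 : Integrable (fun x => m θ1 x * Real.log (m θ1 x / m θ2 x)) μ)
    (h21 : Integrable (fun x => m θ2 x * Real.log (m θ2 x / m θ1 x)) μ)
    (h0 : Integrable (fun x => p0 x * (Real.log (m θ2 x) - Real.log (m θ1 x))) μ)
    (h1 : Integrable (fun x => p1 x * (Real.log (m θ2 x) - Real.log (m θ1 x))) μ) :
    (∫ x, m θ1 x * Real.log (m θ1 x / m θ2 x) ∂μ) +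
        (∫ x, m θ2 x * Real.log (m θ2 x / m θ1 x) ∂μ) =
      (θ2 - θ1) *
        ∫ x, (p1 x - p0 x) * (Real.log (m θ2 x) - Real.log (m θ1 x)) ∂μ := by
  obtain ⟨hθ1a, hθ1b⟩ := hθ1
  obtain ⟨hθ2a, hθ2b⟩ := hθ2
  have key : ∀ x, m θ1 x * Real.log (m θ1 x / m θ2 x) +
      m θ2 x * Real.log (m θ2 x / m θ1 x) =
      (θ2 - θ1) * ((p1 x - p0 x) * (Real.log (m θ2 x) - Real.log (m θ1 x))) := by
    intro x
    subst hm
    simp only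
    by_cases hz : p0 x = 0 ∧ p1 x = 0
    · simp [hz.1, hz.2]
    · have hpos : 0 < p0 x ∨ 0 < p1 x := by
        rcases (hp0nn x).eq_or_lt with h | h
        · rcases (hp1nn x).eq_or_lt with h' | h'
          · exact absurd ⟨h.symm, h'.symm⟩ hz
          · exact Or.inr h'
        · exact Or.inl h
      have hm1 : 0 < (1 - θ1) * p0 x + θ1 * p1 x := by
        rcases hpos with h | h
        · exact add_pos_of_pos_of_nonneg (mul_pos (by linarith) h)
            (mul_nonneg hθ1a.le (hp1nn x))
        · exact add_pos_of_nonneg_of_pos (mul_nonneg (by linarith) (hp0nn x))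
            (mul_pos hθ1a h)
      have hm2 : 0 < (1 - θ2) * p0 x + θ2 * p1 x := by
        rcases hpos with h | h
        · exact add_pos_of_pos_of_nonneg (mul_pos (by linarith) h)
            (mul_nonneg hθ2a.le (hp1nn x))
        · exact add_pos_of_nonneg_of_pos (mul_nonneg (by linarith) (hp0nn x))
            (mul_pos hθ2a h)
      rw [Real.log_div hm1.ne' hm2.ne', Real.log_div hm2.ne' hm1.ne']
      ring
  have hsub : ∀ x, (p1 x - p0 x) * (Real.log (m θ2 x) - Real.log (m θ1 x)) =
      p1 x * (Real.log (m θ2 x) - Real.log (m θ1 x)) -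
        p0 x * (Real.log (m θ2 x) - Real.log (m θ1 x)) := fun x => by ring
  have hint : Integrable
      (fun x => (p1 x - p0 x) * (Real.log (m θ2 x) - Real.log (m θ1 x))) μ := by
    exact (h1.sub h0).congr (Filter.Eventually.of_forall fun x => (hsub x).symm)
  rw [← integral_add h12 h21]
  calc (∫ x, m θ1 x * Real.log (m θ1 x / m θ2 x)
          + m θ2 x * Real.log (m θ2 x / m θ1 x) ∂μ)
      = ∫ x, (θ2 - θ1) *
          ((p1 x - p0 x) * (Real.log (m θ2 x) - Real.log (m θ1 x))) ∂μ := by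
        exact integral_congr_ae (Filter.Eventually.of_forall key)
    _ = (θ2 - θ1) *
          ∫ x, (p1 x - p0 x) * (Real.log (m θ2 x) - Real.log (m θ1 x)) ∂μ := by
        rw [integral_const_mul]
end
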